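/- arXiv:2504.14678 — 5 statements merged into one kernel-verified Lean document; each statement's English description precedes it below -/
import Mathlib

section
/- Suppose μ is a free measure on ℕ which is Rudin-Blass minimal, i.e. for every measure ν with ν ≤_RB μ one has μ ≤_RB ν. If μ is not a Q⁺-measure, then there exists a shift-invariant measure ν with ν ≤_RB μ. -/
open Filter

/-- A finitely additive probability measure defined on all subsets of `ℕ`. -/
def IsMeasure (μ : Set ℕ → ℝ) : Prop :=
  (∀ A : Set ℕ, 0 ≤ μ A ∧ μ A ≤ 1) ∧ μ Set.univ = 1 ∧
    ∀ A B : Set ℕ, Disjoint A B → μ (A ∪ B) = μ A + μ B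

/-- A measure is free if it vanishes on finite sets. -/
def IsFree (μ : Set ℕ → ℝ) : Prop := ∀ A : Set ℕ, A.Finite → μ A = 0

/-- A function is finite-to-one if all fibers are finite. -/
def FinToOne (f : ℕ → ℕ) : Prop := ∀ n : ℕ, (f ⁻¹' {n}).Finite

/-- Rudin-Blass reducibility: `ν ≤_RB μ` via a finite-to-one map. -/
def RBLe (ν μ : Set ℕ → ℝ) : Prop :=
  ∃ f : ℕ → ℕ, FinToOne f ∧ ∀ A : Set ℕ, μ (f ⁻¹' A) = ν A

/-- Rudin-Keisler reducibility: `ν ≤_RK μ`. -/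
def RKLe (ν μ : Set ℕ → ℝ) : Prop :=
  ∃ f : ℕ → ℕ, ∀ A : Set ℕ, μ (f ⁻¹' A) = ν A

/-- A measure is shift invariant if `μ(A + 1) = μ(A)`. -/
def ShiftInvariant (μ : Set ℕ → ℝ) : Prop :=
  ∀ A : Set ℕ, μ ((fun n => n + 1) '' A) = μ A

/-- A measure extends the asymptotic density. -/
def ExtendsDensity (μ : Set ℕ → ℝ) : Prop :=
  ∀ (A : Set ℕ) (d : ℝ),
    Tendsto (fun n : ℕ => ((A ∩ Set.Iio n).ncard : ℝ) / n) atTop (nhds d) → μ A = d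

/-- A partition of `ℕ` indexed by `ℕ`. -/
def IsPartition (A : ℕ → Set ℕ) : Prop :=
  Pairwise (Function.onFun Disjoint A) ∧ (⋃ n, A n) = Set.univ

/-- A selector of a partition: meets each piece in at most one point. -/
def IsSelector (S : Set ℕ) (A : ℕ → Set ℕ) : Prop :=
  ∀ n : ℕ, (S ∩ A n).Subsingleton

/-- A Q-measure: each partition into finite sets has a selector of full measure. -/
def IsQMeasure (μ : Set ℕ → ℝ) : Prop :=
  ∀ A : ℕ → Set ℕ, IsPartition A → (∀ n, (A n).Finite) →
    ∃ S : Set ℕ, IsSelector S A ∧ μ S = 1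

/-- A Q⁺-measure: each partition into finite sets has a selector of positive measure. -/
def IsQPlusMeasure (μ : Set ℕ → ℝ) : Prop :=
  ∀ A : ℕ → Set ℕ, IsPartition A → (∀ n, (A n).Finite) →
    ∃ S : Set ℕ, IsSelector S A ∧ 0 < μ S

/-- A P-measure: each partition has a pseudo-selector of the largest possible measure. -/
def IsPMeasure (μ : Set ℕ → ℝ) : Prop :=
  ∀ A : ℕ → Set ℕ, IsPartition A →
    ∃ S : Set ℕ, (∀ n, (S ∩ A n).Finite) ∧ μ S = 1 - ∑' n, μ (A n)

/-- A selective measure: each partition has a selector of the largest possible measure. -/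
def IsSelectiveMeasure (μ : Set ℕ → ℝ) : Prop :=
  ∀ A : ℕ → Set ℕ, IsPartition A →
    ∃ S : Set ℕ, IsSelector S A ∧ μ S = 1 - ∑' n, μ (A n)

/-- A non-atomic measure: finite partitions into pieces of arbitrarily small measure. -/
def NonAtomic (μ : Set ℕ → ℝ) : Prop :=
  ∀ ε : ℝ, 0 < ε → ∃ (N : ℕ) (P : Fin N → Set ℕ),
    Pairwise (Function.onFun Disjoint P) ∧ (⋃ i, P i) = Set.univ ∧ ∀ i, μ (P i) < ε

/-- The continuum hypothesis: `2 ^ ℵ₀ = ℵ₁`. -/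
def CH : Prop := (2 : Cardinal.{0}) ^ Cardinal.aleph0.{0} = Cardinal.aleph.{0} 1

lemma meas_mono {μ : Set ℕ → ℝ} (hμ : IsMeasure μ) {X Y : Set ℕ} (h : X ⊆ Y) : μ X ≤ μ Y := by
  have hd : Disjoint X (Y \ X) := Set.disjoint_sdiff_right
  have hadd := hμ.2.2 X (Y \ X) hd
  rw [Set.union_diff_cancel h] at hadd
  have h0 := (hμ.1 (Y \ X)).1
  linarith

lemma meas_null_subset {μ : Set ℕ → ℝ} (hμ : IsMeasure μ) {X W : Set ℕ} (hW : μ W = 0)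
    (h : X ⊆ W) : μ X = 0 :=
  le_antisymm (hW ▸ meas_mono hμ h) (hμ.1 X).1

lemma meas_union_null {μ : Set ℕ → ℝ} (hμ : IsMeasure μ) {Y W : Set ℕ} (hW : μ W = 0) :
    μ (Y ∪ W) = μ Y := by
  have hd : Disjoint Y (W \ Y) := Set.disjoint_sdiff_right
  have hadd := hμ.2.2 Y (W \ Y) hd
  rw [Set.union_diff_self] at hadd
  rw [hadd, meas_null_subset hμ hW Set.diff_subset]
  ring

lemma meas_congr_null {μ : Set ℕ → ℝ} (hμ : IsMeasure μ) {X Y W : Set ℕ} (hW : μ W = 0)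
    (h1 : X \ Y ⊆ W) (h2 : Y \ X ⊆ W) : μ X = μ Y := by
  have hXY : X ⊆ Y ∪ W := by
    intro x hx
    by_cases h : x ∈ Y
    · exact Or.inl h
    · exact Or.inr (h1 ⟨hx, h⟩)
  have hYX : Y ⊆ X ∪ W := by
    intro x hx
    by_cases h : x ∈ X
    · exact Or.inl h
    · exact Or.inr (h2 ⟨hx, h⟩)
  refine le_antisymm ?_ ?_
  · calc μ X ≤ μ (Y ∪ W) := meas_mono hμ hXY
      _ = μ Y := meas_union_null hμ hW
  · calc μ Y ≤ μ (X ∪ W) := meas_mono hμ hYX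
      _ = μ X := meas_union_null hμ hW



lemma finToOne_preimage {h : ℕ → ℕ} (hh : FinToOne h) {S : Set ℕ} (hS : S.Finite) :
    (h ⁻¹' S).Finite := by
  have heq : h ⁻¹' S = ⋃ n ∈ S, h ⁻¹' {n} := by ext m; simp
  rw [heq]
  exact hS.biUnion (fun n _ => hh n)

lemma finToOne_iterate {e : ℕ → ℕ} (he : FinToOne e) (t : ℕ) {S : Set ℕ} (hS : S.Finite) :
    ((e^[t]) ⁻¹' S).Finite := by
  induction t with
  | zero => simpa using hS
  | succ t ih =>
    rw [Function.iterate_succ, Set.preimage_comp]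
    exact finToOne_preimage he ih

lemma dyn (e : ℕ → ℕ) (he : FinToOne e) :
    ∃ (q : ℕ → ℕ) (F : Set ℕ), FinToOne q ∧ Set.InjOn e F ∧
      ∀ k, k ∉ F → q k = q (e k) + 1 := by
  classical
  set P : Set ℕ := {y | ∃ t, 0 < t ∧ e^[t] y = y} with hP
  set R : ℕ → ℕ → Prop := fun a b => ∃ s t, e^[s] a = e^[t] b with hR
  have Rrefl : ∀ a, R a a := fun a => ⟨0, 0, rfl⟩
  have Rsymm : ∀ {a b}, R a b → R b a := fun ⟨s, t, h⟩ => ⟨t, s, h.symm⟩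
  have Rtrans : ∀ {a b c}, R a b → R b c → R a c := by
    rintro a b c ⟨s, t, h1⟩ ⟨s', t', h2⟩
    refine ⟨s' + s, t + t', ?_⟩
    calc e^[s' + s] a = e^[s'] (e^[s] a) := Function.iterate_add_apply e s' s a
      _ = e^[s'] (e^[t] b) := by rw [h1]
      _ = e^[s' + t] b := (Function.iterate_add_apply e s' t b).symm
      _ = e^[t + s'] b := by rw [Nat.add_comm]
      _ = e^[t] (e^[s'] b) := Function.iterate_add_apply e t s' b
      _ = e^[t] (e^[t'] c) := by rw [h2]
      _ = e^[t + t'] c := (Function.iterate_add_apply e t t' c).symm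
  have Ppow : ∀ {y d : ℕ}, e^[d] y = y → ∀ m, e^[m * d] y = y := by
    intro y d h m
    induction m with
    | zero => simp
    | succ m ih => rw [Nat.succ_mul, Function.iterate_add_apply, h, ih]
  set Q : Set ℕ := {y | ∃ s, e^[s] y ∈ P} with hQ
  have Qrel : ∀ {k y}, R k y → k ∈ Q → y ∈ Q := by
    rintro k y ⟨a, b, hab⟩ ⟨s, hs⟩
    obtain ⟨d, hd0, hdp⟩ := hs
    have had : a ≤ a * d := Nat.le_mul_of_pos_right a hd0
    refine ⟨(s + a * d - a) + b, ?_⟩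
    have hcalc : e^[(s + a * d - a) + b] y = e^[s] k := by
      calc e^[(s + a * d - a) + b] y
          = e^[s + a * d - a] (e^[b] y) := Function.iterate_add_apply e _ b y
        _ = e^[s + a * d - a] (e^[a] k) := by rw [← hab]
        _ = e^[(s + a * d - a) + a] k := (Function.iterate_add_apply e _ a k).symm
        _ = e^[a * d + s] k := by congr 1; omega
        _ = e^[a * d] (e^[s] k) := Function.iterate_add_apply e _ s k
        _ = e^[s] k := Ppow hdp a
    rw [Set.mem_setOf_eq] at *
    rw [hcalc]
    exact ⟨d, hd0, hdp⟩
  set rep : ℕ → ℕ := fun k => sInf {k' | R k' k} with hrep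
  have repRel : ∀ k, R (rep k) k := by
    intro k
    have hne : {k' | R k' k}.Nonempty := ⟨k, Rrefl k⟩
    exact Nat.sInf_mem hne
  have repCongr : ∀ {k y}, R k y → rep k = rep y := by
    intro k y h
    have hset : {k' | R k' k} = {k' | R k' y} := by
      ext a
      exact ⟨fun ha => Rtrans ha h, fun ha => Rtrans ha (Rsymm h)⟩
    simp only [hrep, hset]
  have Pinj : ∀ {u v}, u ∈ P → v ∈ P → e u = e v → u = v := by
    rintro u v ⟨a, ha0, ha⟩ ⟨b, hb0, hb⟩ huv
    have hu : e^[a * b] u = u := by rw [Nat.mul_comm]; exact Ppow ha b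
    have hv : e^[a * b] v = v := Ppow hb a
    have hab1 : 1 ≤ a * b := Nat.mul_pos ha0 hb0
    calc u = e^[a * b] u := hu.symm
      _ = e^[(a * b - 1) + 1] u := by congr 1; omega
      _ = e^[a * b - 1] (e u) := Function.iterate_succ_apply e _ u
      _ = e^[a * b - 1] (e v) := by rw [huv]
      _ = e^[(a * b - 1) + 1] v := (Function.iterate_succ_apply e _ v).symm
      _ = e^[a * b] v := by congr 1; omega
      _ = v := hv
  set D : Set ℕ := {y | y ∉ Q ∧ ∃ t, e^[t] (rep y) = y} with hD
  set F : Set ℕ := P ∪ D with hF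
  have PsubQ : ∀ {u}, u ∈ P → u ∈ Q := fun {u} hu => ⟨0, by simpa using hu⟩
  have Finj : Set.InjOn e F := by
    rintro u hu v hv huv
    have hRuv : R u v := ⟨1, 1, by simpa using huv⟩
    cases hu with
    | inl hu =>
      cases hv with
      | inl hv => exact Pinj hu hv huv
      | inr hv => exact absurd (Qrel hRuv (PsubQ hu)) hv.1
    | inr hu =>
      cases hv with
      | inl hv => exact absurd (Qrel (Rsymm hRuv) (PsubQ hv)) hu.1
      | inr hv =>
        obtain ⟨huQ, i, hi⟩ := hu
        obtain ⟨hvQ, j, hj⟩ := hv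
        have hx : rep u = rep v := repCongr hRuv
        have key : e^[i + 1] (rep u) = e^[j + 1] (rep u) := by
          rw [Function.iterate_succ_apply', hi, Function.iterate_succ_apply', hx, hj, huv]
        rcases Nat.lt_trichotomy i j with hij | hij | hij
        · exfalso
          have hper : e^[j - i] (e^[i + 1] (rep u)) = e^[i + 1] (rep u) := by
            rw [← Function.iterate_add_apply]
            rw [show (j - i) + (i + 1) = j + 1 by omega]
            exact key.symm
          have : rep u ∈ Q := ⟨i + 1, ⟨j - i, by omega, hper⟩⟩
          exact huQ (Qrel (repRel u) this)
        · rw [← hi, ← hj, hx, hij]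
        · exfalso
          have hper : e^[i - j] (e^[j + 1] (rep u)) = e^[j + 1] (rep u) := by
            rw [← Function.iterate_add_apply]
            rw [show (i - j) + (j + 1) = i + 1 by omega]
            exact key
          have : rep u ∈ Q := ⟨j + 1, ⟨i - j, by omega, hper⟩⟩
          exact huQ (Qrel (repRel u) this)
  have hitEx : ∀ k, ∃ t, e^[t] k ∈ F := by
    intro k
    by_cases hk : k ∈ Q
    · obtain ⟨s, hs⟩ := hk
      exact ⟨s, Or.inl hs⟩
    · obtain ⟨a, b, hab⟩ := repRel k
      have hRbk : R (e^[b] k) k := ⟨0, b, by simp⟩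
      refine ⟨b, Or.inr ⟨fun hyQ => hk (Qrel hRbk hyQ), a, ?_⟩⟩
      rw [repCongr hRbk]
      exact hab
  set hit : ℕ → ℕ := fun k => Nat.find (hitEx k) with hhit
  have hit_spec : ∀ k, e^[hit k] k ∈ F := fun k => Nat.find_spec (hitEx k)
  have hit_le : ∀ k t, e^[t] k ∈ F → hit k ≤ t := fun k t ht => Nat.find_min' (hitEx k) ht
  refine ⟨fun k => hit k + e^[hit k] k, F, ?_, Finj, ?_⟩
  · intro m
    have hsub : (fun k => hit k + e^[hit k] k) ⁻¹' {m}
        ⊆ ⋃ t ∈ Finset.range (m + 1), (e^[t]) ⁻¹' (Set.Iic m) := by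
      intro k hk
      have hk' : hit k + e^[hit k] k = m := hk
      have h1 : hit k ≤ m := by omega
      have h2 : e^[hit k] k ≤ m := by omega
      exact Set.mem_biUnion (Finset.mem_range.mpr (by omega)) h2
    exact Set.Finite.subset
      (Set.Finite.biUnion (Finset.range (m + 1)).finite_toSet
        (fun t _ => finToOne_iterate he t (Set.finite_Iic m))) hsub
  · intro k hk
    have h0 : hit k ≠ 0 := by
      intro h
      exact hk (by simpa [h] using hit_spec k)
    have hstep1 : hit (e k) ≤ hit k - 1 := by
      apply hit_le
      have hrw : e^[hit k - 1] (e k) = e^[hit k] k := by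
        rw [← Function.iterate_succ_apply]
        congr 1
        omega
      rw [hrw]
      exact hit_spec k
    have hstep2 : hit k ≤ hit (e k) + 1 := by
      apply hit_le
      rw [Function.iterate_succ_apply]
      exact hit_spec (e k)
    have hh : hit k = hit (e k) + 1 := by omega
    have hroot : e^[hit k] k = e^[hit (e k)] (e k) := by
      rw [hh, Function.iterate_succ_apply]
    show hit k + e^[hit k] k = (hit (e k) + e^[hit (e k)] (e k)) + 1
    rw [hroot, hh]
    ring

/-- An RB-minimal free measure which is not a Q⁺-measure has a shift-invariant
measure RB-below it. -/
theorem stmt_2 (μ : Set ℕ → ℝ) (hμ : IsMeasure μ) (hfree : IsFree μ)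
    (hmin : ∀ ν : Set ℕ → ℝ, IsMeasure ν → RBLe ν μ → RBLe μ ν)
    (hnotQ : ¬ IsQPlusMeasure μ) :
    ∃ ν : Set ℕ → ℝ, IsMeasure ν ∧ ShiftInvariant ν ∧ RBLe ν μ := by
  classical
  rw [IsQPlusMeasure] at hnotQ
  push_neg at hnotQ
  obtain ⟨A, hpart, hfin, hsel⟩ := hnotQ
  have hsel0 : ∀ S : Set ℕ, IsSelector S A → μ S = 0 := fun S hS =>
    le_antisymm (hsel S hS) (hμ.1 S).1
  -- the collapsing map fA
  have hcover : ∀ m : ℕ, ∃ n, m ∈ A n := by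
    intro m
    have hm : m ∈ ⋃ n, A n := hpart.2 ▸ Set.mem_univ m
    exact Set.mem_iUnion.mp hm
  choose fA hfA using hcover
  have huniq : ∀ m n, m ∈ A n → fA m = n := by
    intro m n hmn
    by_contra hne
    exact Set.disjoint_left.mp (hpart.1 hne) (hfA m) hmn
  have hpre_single : ∀ n, fA ⁻¹' {n} = A n := by
    intro n
    ext m
    constructor
    · intro hm
      have : fA m = n := hm
      exact this ▸ hfA m
    · intro hm
      exact huniq m n hm
  have hfto : FinToOne fA := fun n => (hpre_single n) ▸ hfin n
  -- the pushforward ν₀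
  set ν₀ : Set ℕ → ℝ := fun B => μ (fA ⁻¹' B) with hν₀def
  have hν₀meas : IsMeasure ν₀ := by
    refine ⟨fun B => hμ.1 _, ?_, ?_⟩
    · show μ (fA ⁻¹' Set.univ) = 1
      rw [Set.preimage_univ]
      exact hμ.2.1
    · intro X Y hXY
      show μ (fA ⁻¹' (X ∪ Y)) = μ (fA ⁻¹' X) + μ (fA ⁻¹' Y)
      rw [Set.preimage_union]
      exact hμ.2.2 _ _ (hXY.preimage fA)
  obtain ⟨g, hgfto, hg⟩ := hmin ν₀ hν₀meas ⟨fA, hfto, fun B => rfl⟩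
  set e : ℕ → ℕ := fA ∘ g with he_def
  have he : FinToOne e := by
    intro n
    have : e ⁻¹' {n} = g ⁻¹' (fA ⁻¹' {n}) := rfl
    rw [this, hpre_single]
    exact finToOne_preimage hgfto (hfin n)
  have hinv : ∀ B : Set ℕ, ν₀ (e ⁻¹' B) = ν₀ B := by
    intro B
    have h1 : e ⁻¹' B = g ⁻¹' (fA ⁻¹' B) := rfl
    rw [h1, hg]
  have hstar : ∀ T : Set ℕ, Set.InjOn e T → ν₀ T = 0 := by
    intro T hT
    have hSsel : IsSelector (g '' T) A := by
      intro n x hx y hy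
      obtain ⟨⟨kx, hkx, rfl⟩, hxA⟩ := hx
      obtain ⟨⟨ky, hky, rfl⟩, hyA⟩ := hy
      have h1 : e kx = n := huniq _ _ hxA
      have h2 : e ky = n := huniq _ _ hyA
      rw [hT hkx hky (h1.trans h2.symm)]
    have hμS : μ (g '' T) = 0 := hsel0 _ hSsel
    have hsub : T ⊆ g ⁻¹' (g '' T) := Set.subset_preimage_image g T
    have hnull : ν₀ (g ⁻¹' (g '' T)) = 0 := by rw [hg]; exact hμS
    exact le_antisymm (hnull ▸ meas_mono hν₀meas hsub) (hν₀meas.1 T).1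
  -- dynamics
  obtain ⟨q, F, hqfto, hFinj, hstep⟩ := dyn e he
  have hFnull : ν₀ F = 0 := hstar F hFinj
  refine ⟨fun B => ν₀ (q ⁻¹' B), ⟨fun B => hν₀meas.1 _, ?_, ?_⟩, ?_, ⟨q ∘ fA, ?_, fun B => rfl⟩⟩
  · show ν₀ (q ⁻¹' Set.univ) = 1
    rw [Set.preimage_univ]
    exact hν₀meas.2.1
  · intro X Y hXY
    show ν₀ (q ⁻¹' (X ∪ Y)) = ν₀ (q ⁻¹' X) + ν₀ (q ⁻¹' Y)
    rw [Set.preimage_union]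
    exact hν₀meas.2.2 _ _ (hXY.preimage q)
  · -- shift invariance
    intro B
    show ν₀ (q ⁻¹' ((fun n => n + 1) '' B)) = ν₀ (q ⁻¹' B)
    have key : ∀ k, k ∉ F → (k ∈ q ⁻¹' ((fun n => n + 1) '' B) ↔ k ∈ e ⁻¹' (q ⁻¹' B)) := by
      intro k hk
      simp only [Set.mem_preimage, Set.mem_image]
      constructor
      · rintro ⟨b, hb, hbq⟩
        have : q k = q (e k) + 1 := hstep k hk
        have : b = q (e k) := by omega
        rwa [← this]
      · intro hb
        exact ⟨q (e k), hb, (hstep k hk).symm⟩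
    have h1 : q ⁻¹' ((fun n => n + 1) '' B) \ e ⁻¹' (q ⁻¹' B) ⊆ F := by
      intro k hk
      by_contra hkF
      exact hk.2 ((key k hkF).mp hk.1)
    have h2 : e ⁻¹' (q ⁻¹' B) \ q ⁻¹' ((fun n => n + 1) '' B) ⊆ F := by
      intro k hk
      by_contra hkF
      exact hk.2 ((key k hkF).mpr hk.1)
    calc ν₀ (q ⁻¹' ((fun n => n + 1) '' B))
        = ν₀ (e ⁻¹' (q ⁻¹' B)) := meas_congr_null hν₀meas hFnull h1 h2
      _ = ν₀ (q ⁻¹' B) := hinv _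
  · -- FinToOne (q ∘ fA)
    intro n
    have : (q ∘ fA) ⁻¹' {n} = fA ⁻¹' (q ⁻¹' {n}) := rfl
    rw [this]
    exact finToOne_preimage hfto (hqfto n)
end

section
/- If μ is a free Q-measure on ℕ and ν is a measure with ν ≤_RB μ, then μ ≤_RB ν. -/
open Filter

/-- Every free Q-measure is Rudin-Blass minimal. -/
theorem stmt_3 (μ ν : Set ℕ → ℝ) (hμ : IsMeasure μ) (hfree : IsFree μ)
    (hQ : IsQMeasure μ) (hν : IsMeasure ν) (h : RBLe ν μ) : RBLe μ ν := by
  classical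
  obtain ⟨f, hf, hpush⟩ := h
  obtain ⟨hnn, huniv, hadd⟩ := hμ
  have hmono : ∀ A B : Set ℕ, A ⊆ B → μ A ≤ μ B := by
    intro A B hAB
    have h1 : μ B = μ A + μ (B \ A) := by
      rw [← hadd A (B \ A) disjoint_sdiff_self_right, Set.union_diff_cancel hAB]
    linarith [(hnn (B \ A)).1]
  obtain ⟨S, hSsel, hS1⟩ := hQ (fun n => f ⁻¹' {n})
    ⟨fun m n hmn => Set.disjoint_left.mpr (fun x hx hx' => hmn (hx.symm.trans hx')), by
      ext x; simp⟩ hf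
  have hScompl : μ Sᶜ = 0 := by
    have h2 := hadd S Sᶜ disjoint_compl_right
    rw [Set.union_compl_self, huniv] at h2
    linarith
  have hagree : ∀ B : Set ℕ, μ B = μ (B ∩ S) := by
    intro B
    have h1 : μ (B ∩ Sᶜ) = 0 :=
      le_antisymm (hScompl ▸ hmono _ _ Set.inter_subset_right) (hnn _).1
    have hdisj : Disjoint (B ∩ S) (B ∩ Sᶜ) :=
      disjoint_compl_right.mono Set.inter_subset_right Set.inter_subset_right
    have h2 : μ (B ∩ S ∪ B ∩ Sᶜ) = μ (B ∩ S) + μ (B ∩ Sᶜ) := hadd _ _ hdisj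
    rw [Set.inter_union_compl] at h2
    linarith
  set g : ℕ → ℕ := fun n => if hn : (S ∩ f ⁻¹' {n}).Nonempty then hn.choose else n with hg
  have hgf : ∀ x ∈ S, g (f x) = x := by
    intro x hx
    have hne : (S ∩ f ⁻¹' {f x}).Nonempty := ⟨x, hx, rfl⟩
    have := hSsel (f x) hne.choose_spec ⟨hx, rfl⟩
    simp only [hg, dif_pos hne]
    exact this
  refine ⟨g, ?_, ?_⟩
  · intro m
    apply Set.Finite.subset ((Set.finite_singleton (f m)).insert m)
    intro n hn
    simp only [Set.mem_preimage, Set.mem_singleton_iff] at hn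
    by_cases hne : (S ∩ f ⁻¹' {n}).Nonempty
    · have hc := hne.choose_spec
      have : g n = hne.choose := dif_pos hne
      rw [this] at hn
      have : f m = n := by rw [← hn]; exact hc.2
      rw [← this]; simp
    · have : g n = n := dif_neg hne
      rw [this] at hn
      simp [hn]
  · intro A
    rw [← hpush (g ⁻¹' A)]
    have hset : f ⁻¹' (g ⁻¹' A) ∩ S = A ∩ S := by
      ext x
      constructor
      · rintro ⟨hxA, hxS⟩
        refine ⟨?_, hxS⟩
        simpa [Set.mem_preimage, hgf x hxS] using hxA
      · rintro ⟨hxA, hxS⟩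
        exact ⟨by simpa [Set.mem_preimage, hgf x hxS] using hxA, hxS⟩
    rw [hagree (f ⁻¹' (g ⁻¹' A)), hset, ← hagree A]
end

section
/- A free measure μ on ℕ is selective if and only if it is both a P-measure and a Q-measure. -/
open Filter

/-- A free measure is selective iff it is both a P-measure and a Q-measure. -/
theorem stmt_4 (μ : Set ℕ → ℝ) (hμ : IsMeasure μ) (hfree : IsFree μ) :
    IsSelectiveMeasure μ ↔ IsPMeasure μ ∧ IsQMeasure μ := by
  obtain ⟨hb, huniv, hadd⟩ := hμ
  have mono : ∀ {X Y : Set ℕ}, X ⊆ Y → μ X ≤ μ Y := by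
    intro X Y h
    have : μ Y = μ X + μ (Y \ X) := by
      rw [← hadd X (Y \ X) disjoint_sdiff_self_right, Set.union_diff_cancel h]
    linarith [(hb (Y \ X)).1]
  constructor
  · intro hsel
    constructor
    · intro A hA
      obtain ⟨S, hS1, hS2⟩ := hsel A hA
      exact ⟨S, fun n => (hS1 n).finite, hS2⟩
    · intro A hA hfin
      obtain ⟨S, hS1, hS2⟩ := hsel A hA
      refine ⟨S, hS1, ?_⟩
      have h0 : ∑' n, μ (A n) = 0 := by
        have : ∀ n : ℕ, μ (A n) = 0 := fun n => hfree _ (hfin n)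
        calc ∑' n, μ (A n) = ∑' _ : ℕ, (0 : ℝ) := tsum_congr this
          _ = 0 := tsum_zero
      rw [h0] at hS2; linarith
  · rintro ⟨hP, hQ⟩ A hA
    obtain ⟨S, hSfin, hSμ⟩ := hP A hA
    set D : ℕ → Set ℕ := fun k => if Even k then S ∩ A (k / 2) else {k / 2} \ S with hD
    have hDeven : ∀ n : ℕ, D (2 * n) = S ∩ A n := by
      intro n
      simp only [hD, if_pos (even_two_mul n), Nat.mul_div_cancel_left n two_pos]
    have hDodd : ∀ n : ℕ, D (2 * n + 1) = {n} \ S := by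
      intro n
      have : ¬ Even (2 * n + 1) := by simp [Nat.even_add_one]
      have h2 : (2 * n + 1) / 2 = n := by omega
      simp only [hD, if_neg this, h2]
    have hDpart : IsPartition D := by
      constructor
      · intro j k hjk
        simp only [Function.onFun]
        rw [Set.disjoint_left]
        intro x hxj hxk
        rcases Nat.even_or_odd j with ⟨a, ha⟩ | ⟨a, ha⟩ <;>
          rcases Nat.even_or_odd k with ⟨b, hb'⟩ | ⟨b, hb'⟩
        · have hj : j = 2 * a := by omega
          have hk : k = 2 * b := by omega
          subst hj hk
          rw [hDeven] at hxj hxk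
          have hab : a ≠ b := by omega
          exact Set.disjoint_left.mp (hA.1 hab) hxj.2 hxk.2
        · have hj : j = 2 * a := by omega
          have hk : k = 2 * b + 1 := by omega
          subst hj hk
          rw [hDeven] at hxj; rw [hDodd] at hxk
          exact hxk.2 hxj.1
        · have hj : j = 2 * a + 1 := by omega
          have hk : k = 2 * b := by omega
          subst hj hk
          rw [hDodd] at hxj; rw [hDeven] at hxk
          exact hxj.2 hxk.1
        · have hj : j = 2 * a + 1 := by omega
          have hk : k = 2 * b + 1 := by omega
          subst hj hk
          rw [hDodd] at hxj; rw [hDodd] at hxk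
          have hab : a ≠ b := by omega
          exact hab (hxj.1.symm.trans hxk.1)
      · apply Set.eq_univ_of_forall
        intro x
        by_cases hxS : x ∈ S
        · have : x ∈ ⋃ n, A n := hA.2 ▸ Set.mem_univ x
          obtain ⟨n, hn⟩ := Set.mem_iUnion.mp this
          exact Set.mem_iUnion.mpr ⟨2 * n, (hDeven n).symm ▸ ⟨hxS, hn⟩⟩
        · exact Set.mem_iUnion.mpr ⟨2 * x + 1, (hDodd x).symm ▸ ⟨rfl, hxS⟩⟩
    have hDfin : ∀ k, (D k).Finite := by
      intro k
      rcases Nat.even_or_odd k with ⟨a, ha⟩ | ⟨a, ha⟩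
      · have : k = 2 * a := by omega
        rw [this, hDeven]
        exact hSfin a
      · have : k = 2 * a + 1 := by omega
        rw [this, hDodd]
        exact (Set.finite_singleton a).diff
    obtain ⟨T, hTsel, hTμ⟩ := hQ D hDpart hDfin
    refine ⟨S ∩ T, ?_, ?_⟩
    · intro n
      refine (hTsel (2 * n)).anti ?_
      rw [hDeven]
      intro x hx
      exact ⟨hx.1.2, hx.1.1, hx.2⟩
    · have e1 : μ S = μ (S \ T) + μ (S ∩ T) := by
        rw [← hadd _ _ (Set.disjoint_of_subset_right Set.inter_subset_right disjoint_sdiff_self_left),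
          Set.diff_union_inter]
      have e2 : μ (S ∪ T) = μ (S \ T) + μ T := by
        rw [← hadd _ _ disjoint_sdiff_self_left, Set.diff_union_self]
      have e3 : μ (S ∪ T) ≤ 1 := (hb _).2
      have e4 : 0 ≤ μ (S \ T) := (hb _).1
      have : μ (S ∩ T) = μ S := by linarith
      rw [this, hSμ]
end

section
/- Assume the continuum hypothesis (2^ℵ₀ = ℵ₁). Then there exists a free measure on ℕ which is non-atomic and a Q-measure. -/
open Filter

open Classical in
noncomputable def ulim {ι : Type*} (L : Ultrafilter ι) (f : ι → ℝ) : ℝ :=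
  if h : ∃ x, Filter.Tendsto f (L : Filter ι) (nhds x) then h.choose else 0

theorem ulim_spec {ι : Type*} (L : Ultrafilter ι) (f : ι → ℝ)
    (hf : ∀ i, f i ∈ Set.Icc (0:ℝ) 1) :
    Filter.Tendsto f (L : Filter ι) (nhds (ulim L f)) := by
  have hle : (L.map f : Filter ℝ) ≤ Filter.principal (Set.Icc 0 1) := by
    rw [Ultrafilter.coe_map, le_principal_iff, mem_map]
    exact mem_of_superset univ_mem (fun i _ => hf i)
  obtain ⟨a, -, ha⟩ := (isCompact_Icc (a := (0:ℝ)) (b := 1)).ultrafilter_le_nhds (L.map f) hle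
  have h : ∃ x, Filter.Tendsto f (L : Filter ι) (nhds x) := ⟨a, by rwa [Ultrafilter.coe_map] at ha⟩
  rw [ulim, dif_pos h]; exact h.choose_spec

theorem ulim_eq {ι : Type*} (L : Ultrafilter ι) {f : ι → ℝ} {x : ℝ}
    (hf : ∀ i, f i ∈ Set.Icc (0:ℝ) 1)
    (hx : Filter.Tendsto f (L : Filter ι) (nhds x)) : ulim L f = x :=
  tendsto_nhds_unique (ulim_spec L f hf) hx

theorem ulim_mem {ι : Type*} (L : Ultrafilter ι) (f : ι → ℝ)
    (hf : ∀ i, f i ∈ Set.Icc (0:ℝ) 1) : ulim L f ∈ Set.Icc (0:ℝ) 1 :=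
  isClosed_Icc.mem_of_tendsto (ulim_spec L f hf) (Filter.Eventually.of_forall hf)

/-- Residue class mod `2^k`. -/
def Ecl (k j : ℕ) : Set ℕ := {n | n % 2^k = j}

theorem Ecl_infinite {k j : ℕ} (hj : j < 2^k) : (Ecl k j).Infinite := by
  apply Set.infinite_of_injective_forall_mem (f := fun m : ℕ => j + m * 2^k)
  · intro a b hab
    simp only at hab
    have h2 : a * 2^k = b * 2^k := by omega
    exact Nat.eq_of_mul_eq_mul_right (Nat.two_pow_pos _) h2
  · intro m
    show (j + m * 2^k) % 2^k = j
    rw [Nat.add_mul_mod_self_right, Nat.mod_eq_of_lt hj]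

theorem Ecl_disjoint {k i j : ℕ} (h : i ≠ j) : Disjoint (Ecl k i) (Ecl k j) := by
  rw [Set.disjoint_left]
  intro n hi hj
  exact h (hi.symm.trans hj)

theorem Ecl_cover (k : ℕ) (n : ℕ) : n ∈ Ecl k (n % 2^k) := rfl

theorem card_filter_mod_mul {q j : ℕ} (hq : 0 < q) (hj : j < q) (n : ℕ) :
    ((Finset.range (q*n)).filter (fun s => s % q = j)).card = n := by
  induction n with
  | zero => simp
  | succ n ih =>
    have hsplit : Finset.range (q*(n+1)) = Finset.range (q*n) ∪ Finset.Ico (q*n) (q*n+q) := by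
      rw [Finset.range_eq_Ico, Finset.range_eq_Ico, Finset.Ico_union_Ico_eq_Ico (Nat.zero_le _)
        (by omega : q*n ≤ q*n+q), Nat.mul_succ]
    have hdisj : Disjoint (Finset.range (q*n)) (Finset.Ico (q*n) (q*n+q)) := by
      rw [Finset.disjoint_left]
      intro a ha hb
      simp only [Finset.mem_range] at ha
      simp only [Finset.mem_Ico] at hb
      omega
    rw [hsplit, Finset.filter_union, Finset.card_union_of_disjoint
      (Finset.disjoint_filter_filter hdisj), ih]
    have hone : (Finset.Ico (q*n) (q*n+q)).filter (fun s => s % q = j) = {q*n+j} := by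
      ext s
      simp only [Finset.mem_filter, Finset.mem_Ico, Finset.mem_singleton]
      constructor
      · rintro ⟨⟨h1, h2⟩, h3⟩
        have hdm : q * (s / q) + s % q = s := Nat.div_add_mod s q
        have hdiv : s / q = n := by
          have h4 : q * (s/q) ≤ s := by omega
          have h5 := Nat.mod_lt s hq
          -- q*n ≤ s < q*n + q and s = q*(s/q) + s%q with s%q < q
          by_contra hne
          rcases Nat.lt_or_ge (s/q) n with hlt | hge
          · have : q * (s/q) + q ≤ q * n := by
              have : s/q + 1 ≤ n := hlt
              calc q * (s/q) + q = q * (s/q + 1) := by ring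
                _ ≤ q * n := Nat.mul_le_mul_left q this
            omega
          · have hgt : n < s/q := by omega
            have : q * n + q ≤ q * (s/q) := by
              calc q * n + q = q * (n+1) := by ring
                _ ≤ q * (s/q) := Nat.mul_le_mul_left q hgt
            omega
        rw [hdiv, h3] at hdm
        omega
      · rintro rfl
        refine ⟨⟨by omega, by omega⟩, ?_⟩
        rw [Nat.mul_add_mod, Nat.mod_eq_of_lt hj]
    rw [hone, Finset.card_singleton]

theorem nat_lt_div_succ_mul (m : ℕ) {q : ℕ} (hq : 0 < q) : m < q * (m / q + 1) := by
  have h1 : q * (m / q) + m % q = m := Nat.div_add_mod m q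
  have h2 : m % q < q := Nat.mod_lt m hq
  have h3 : q * (m/q+1) = q * (m/q) + q := by ring
  omega

theorem card_filter_mod_bounds {q j : ℕ} (hq : 0 < q) (hj : j < q) (m : ℕ) :
    m / q ≤ ((Finset.range m).filter (fun s => s % q = j)).card ∧
    ((Finset.range m).filter (fun s => s % q = j)).card ≤ m / q + 1 := by
  constructor
  · calc m / q = ((Finset.range (q*(m/q))).filter (fun s => s % q = j)).card :=
          (card_filter_mod_mul hq hj _).symm
      _ ≤ _ := Finset.card_le_card (Finset.filter_subset_filter _
          (Finset.range_subset_range.mpr (by rw [Nat.mul_comm]; exact Nat.div_mul_le_self m q)))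
  · calc ((Finset.range m).filter (fun s => s % q = j)).card
        ≤ ((Finset.range (q*(m/q+1))).filter (fun s => s % q = j)).card :=
          Finset.card_le_card (Finset.filter_subset_filter _
            (Finset.range_subset_range.mpr (le_of_lt (nat_lt_div_succ_mul m hq))))
      _ = m / q + 1 := card_filter_mod_mul hq hj _

theorem tendsto_nat_div_cast (q : ℕ) (hq : 0 < q) :
    Tendsto (fun m : ℕ => ((m / q : ℕ) : ℝ) / m) atTop (nhds (1/(q:ℝ))) := by
  have hq' : (0:ℝ) < q := by exact_mod_cast hq
  apply tendsto_of_tendsto_of_tendsto_of_le_of_le'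
    (g := fun m : ℕ => 1/(q:ℝ) - 1/m) (h := fun _ : ℕ => 1/(q:ℝ))
  · simpa using tendsto_const_nhds.sub (tendsto_one_div_atTop_nhds_zero_nat (𝕜 := ℝ))
  · exact tendsto_const_nhds
  · filter_upwards [eventually_ge_atTop 1] with m hm
    have hm' : (0:ℝ) < m := by exact_mod_cast hm
    have h1 : (m:ℝ) < ((m/q : ℕ):ℝ) * q + q := by
      have h := nat_lt_div_succ_mul m hq
      have h' : (m:ℝ) < ((q * (m/q + 1) : ℕ) : ℝ) := by exact_mod_cast h
      push_cast at h'
      linarith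
    have key : (m:ℝ)/q - 1 ≤ ((m/q : ℕ):ℝ) := by
      rw [sub_le_iff_le_add, div_le_iff₀ hq']
      linarith
    calc 1/(q:ℝ) - 1/m = ((m:ℝ)/q - 1)/m := by field_simp
      _ ≤ ((m/q : ℕ):ℝ)/m := div_le_div_of_nonneg_right key hm'.le
  · filter_upwards [eventually_ge_atTop 1] with m hm
    have hm' : (0:ℝ) < m := by exact_mod_cast hm
    have h2 : ((m/q : ℕ) : ℝ) * q ≤ m := by exact_mod_cast Nat.div_mul_le_self m q
    rw [div_le_div_iff₀ hm' hq']
    nlinarith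
section
variable {S : Set ℕ}

/-- cells hypothesis -/
def Cells (S : Set ℕ) : Prop := ∀ k j, j < 2^k → (S ∩ Ecl k j).Infinite

open Classical in
noncomputable def seqS (S : Set ℕ) (m : ℕ) : ℕ :=
  if h : ∃ x, x ∈ S ∩ Ecl m (m % 2^m) ∧ ∀ s, s < m → seqS S s < x then h.choose else m
termination_by m
decreasing_by all_goals omega

theorem seqS_spec (hS : Cells S) (m : ℕ) :
    seqS S m ∈ S ∧ seqS S m % 2^m = m % 2^m ∧ ∀ s, s < m → seqS S s < seqS S m := by
  have hex : ∃ x, x ∈ S ∩ Ecl m (m % 2^m) ∧ ∀ s, s < m → seqS S s < x := by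
    obtain ⟨x, hx, hgt⟩ := (hS m (m % 2^m) (Nat.mod_lt _ (Nat.two_pow_pos _))).exists_gt
      ((Finset.range m).sup (seqS S))
    exact ⟨x, hx, fun s hs => lt_of_le_of_lt (Finset.le_sup (Finset.mem_range.mpr hs)) hgt⟩
  rw [seqS, dif_pos hex]
  obtain ⟨⟨h1, h2⟩, h3⟩ := hex.choose_spec
  exact ⟨h1, h2, h3⟩

theorem seqS_strictMono (hS : Cells S) : StrictMono (seqS S) :=
  fun s m h => (seqS_spec hS m).2.2 s h

theorem seqS_mem (hS : Cells S) (m : ℕ) : seqS S m ∈ S := (seqS_spec hS m).1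

theorem seqS_mod (hS : Cells S) {k m : ℕ} (hk : k ≤ m) : seqS S m % 2^k = m % 2^k :=
  Nat.ModEq.of_dvd (pow_dvd_pow 2 hk) (seqS_spec hS m).2.1
end


section nu
variable {S : Set ℕ}

open Classical in
noncomputable def cntS (S A : Set ℕ) (m : ℕ) : ℕ :=
  ((Finset.range m).filter (fun s => seqS S s ∈ A)).card

noncomputable def freqS (S A : Set ℕ) (m : ℕ) : ℝ := (cntS S A m : ℝ) / m

noncomputable def nuS (S A : Set ℕ) : ℝ := ulim (Filter.hyperfilter ℕ) (freqS S A)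

theorem cntS_le (S A : Set ℕ) (m : ℕ) : cntS S A m ≤ m := by
  classical
  calc cntS S A m ≤ (Finset.range m).card := Finset.card_filter_le _ _
    _ = m := Finset.card_range m

theorem freqS_mem (S A : Set ℕ) (m : ℕ) : freqS S A m ∈ Set.Icc (0:ℝ) 1 := by
  rcases Nat.eq_zero_or_pos m with rfl | hm
  · simp [freqS]
  · have hm' : (0:ℝ) < m := by exact_mod_cast hm
    constructor
    · exact div_nonneg (Nat.cast_nonneg _) (Nat.cast_nonneg _)
    · rw [freqS, div_le_one hm']
      exact_mod_cast cntS_le S A m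

theorem nuS_tendsto (S A : Set ℕ) :
    Tendsto (freqS S A) (Filter.hyperfilter ℕ : Filter ℕ) (nhds (nuS S A)) :=
  ulim_spec _ _ (freqS_mem S A)

theorem nuS_mem (S A : Set ℕ) : nuS S A ∈ Set.Icc (0:ℝ) 1 :=
  ulim_mem _ _ (freqS_mem S A)

theorem hyper_le_atTop : (Filter.hyperfilter ℕ : Filter ℕ) ≤ atTop := by
  rw [← Nat.cofinite_eq_atTop]; exact Filter.hyperfilter_le_cofinite

theorem nuS_eq_of_tendsto_atTop {S A : Set ℕ} {x : ℝ}
    (h : Tendsto (freqS S A) atTop (nhds x)) : nuS S A = x :=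
  ulim_eq _ (freqS_mem S A) (h.mono_left hyper_le_atTop)

theorem nuS_union {A B : Set ℕ} (h : Disjoint A B) :
    nuS S (A ∪ B) = nuS S A + nuS S B := by
  classical
  have hcnt : ∀ m, freqS S (A ∪ B) m = freqS S A m + freqS S B m := by
    intro m
    have hdisj : Disjoint ((Finset.range m).filter (fun s => seqS S s ∈ A))
        ((Finset.range m).filter (fun s => seqS S s ∈ B)) := by
      rw [Finset.disjoint_left]
      intro s h1 h2
      simp only [Finset.mem_filter] at h1 h2
      exact Set.disjoint_left.mp h h1.2 h2.2
    have hc : cntS S (A ∪ B) m = cntS S A m + cntS S B m := by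
      rw [cntS, cntS, cntS]
      simp only [Set.mem_union]
      rw [Finset.filter_or, Finset.card_union_of_disjoint hdisj]
    rw [freqS, freqS, freqS, hc]
    push_cast
    rw [add_div]
  have : Tendsto (freqS S (A ∪ B)) (Filter.hyperfilter ℕ : Filter ℕ)
      (nhds (nuS S A + nuS S B)) := by
    have := (nuS_tendsto S A).add (nuS_tendsto S B)
    exact Tendsto.congr (fun m => (hcnt m).symm) this
  exact ulim_eq _ (freqS_mem S _) this

theorem nuS_zero_of_finite {A : Set ℕ} (h : {m | seqS S m ∈ A}.Finite) :
    nuS S A = 0 := by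
  classical
  apply nuS_eq_of_tendsto_atTop
  apply tendsto_of_tendsto_of_tendsto_of_le_of_le (g := fun _ : ℕ => (0:ℝ))
    (h := fun m : ℕ => (h.toFinset.card : ℝ) / m)
  · exact tendsto_const_nhds
  · exact tendsto_const_div_atTop_nhds_zero_nat _
  · intro m; exact (freqS_mem S A m).1
  · intro m
    apply div_le_div_of_nonneg_right ?_ (Nat.cast_nonneg m)
    have : (Finset.range m).filter (fun s => seqS S s ∈ A) ⊆ h.toFinset := by
      intro s hs
      simp only [Finset.mem_filter] at hs
      simpa using hs.2
    have h' : cntS S A m ≤ h.toFinset.card := Finset.card_le_card this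
    exact Nat.cast_le.mpr h'

theorem nuS_univ (S : Set ℕ) : nuS S Set.univ = 1 := by
  classical
  apply nuS_eq_of_tendsto_atTop
  have : ∀ m : ℕ, 1 ≤ m → freqS S Set.univ m = 1 := by
    intro m hm
    have hm' : (0:ℝ) < m := by exact_mod_cast hm
    rw [freqS, cntS]
    simp only [Set.mem_univ, Finset.filter_true_of_mem, Finset.card_range, implies_true]
    exact div_self (ne_of_gt hm')
  apply Tendsto.congr' _ tendsto_const_nhds
  filter_upwards [eventually_ge_atTop 1] with m hm
  exact (this m hm).symm

theorem nuS_one_of_cofinite {A : Set ℕ} (h : {m | seqS S m ∉ A}.Finite) :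
    nuS S A = 1 := by
  have hd : Disjoint A (Set.univ \ A) := by
    rw [Set.disjoint_left]; intro x hx hx'; exact hx'.2 hx
  have hu : A ∪ (Set.univ \ A) = Set.univ := Set.union_diff_cancel (Set.subset_univ A)
  have h0 : nuS S (Set.univ \ A) = 0 := by
    apply nuS_zero_of_finite
    apply h.subset
    intro m hm
    exact hm.2
  have := nuS_union (S := S) hd
  rw [hu, nuS_univ, h0, add_zero] at this
  exact this.symm
end nu

section ecl
variable {S : Set ℕ}
open Classical

theorem tendsto_freq_mod {q j : ℕ} (hq : 0 < q) (hj : j < q) :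
    Tendsto (fun m : ℕ => (((Finset.range m).filter (fun s => s % q = j)).card : ℝ)/m)
      atTop (nhds (1/(q:ℝ))) := by
  apply tendsto_of_tendsto_of_tendsto_of_le_of_le
    (g := fun m : ℕ => ((m / q : ℕ) : ℝ) / m)
    (h := fun m : ℕ => ((m / q : ℕ) : ℝ) / m + 1/m)
  · exact tendsto_nat_div_cast q hq
  · simpa using (tendsto_nat_div_cast q hq).add tendsto_one_div_atTop_nhds_zero_nat
  · intro m
    apply div_le_div_of_nonneg_right _ (Nat.cast_nonneg m)
    exact Nat.cast_le.mpr (card_filter_mod_bounds hq hj m).1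
  · intro m
    have h2 : (((Finset.range m).filter (fun s => s % q = j)).card : ℝ) ≤ ((m/q : ℕ) : ℝ) + 1 := by
      exact_mod_cast (card_filter_mod_bounds hq hj m).2
    calc (((Finset.range m).filter (fun s => s % q = j)).card : ℝ)/m
        ≤ (((m/q : ℕ) : ℝ) + 1)/m := div_le_div_of_nonneg_right h2 (Nat.cast_nonneg m)
      _ = ((m / q : ℕ) : ℝ) / m + 1/m := add_div _ _ _

theorem nuS_Ecl (hS : Cells S) {k j : ℕ} (hj : j < 2^k) :
    nuS S (Ecl k j) = 1/((2^k : ℕ) : ℝ) := by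
  set q := 2^k with hqdef
  have hq : 0 < q := Nat.two_pow_pos _
  set c : ℕ → ℕ := fun m => ((Finset.range m).filter (fun s => s % q = j)).card with hc
  have hcnt1 : ∀ m, c m ≤ cntS S (Ecl k j) m + k := by
    intro m
    have hsub : (Finset.range m).filter (fun s => s % q = j) ⊆
        ((Finset.range m).filter (fun s => seqS S s ∈ Ecl k j)) ∪ Finset.range k := by
      intro s hs
      simp only [Finset.mem_filter, Finset.mem_range] at hs
      rcases Nat.lt_or_ge s k with hsk | hsk
      · exact Finset.mem_union_right _ (Finset.mem_range.mpr hsk)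
      · apply Finset.mem_union_left
        rw [Finset.mem_filter]
        refine ⟨Finset.mem_range.mpr hs.1, ?_⟩
        show seqS S s % 2^k = j
        rw [seqS_mod hS hsk]
        exact hs.2
    calc c m ≤ (((Finset.range m).filter (fun s => seqS S s ∈ Ecl k j)) ∪ Finset.range k).card :=
          Finset.card_le_card hsub
      _ ≤ cntS S (Ecl k j) m + k := by
          refine le_trans (Finset.card_union_le _ _) ?_
          rw [Finset.card_range]
          rfl
  have hcnt2 : ∀ m, cntS S (Ecl k j) m ≤ c m + k := by
    intro m
    have hsub : ((Finset.range m).filter (fun s => seqS S s ∈ Ecl k j)) ⊆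
        ((Finset.range m).filter (fun s => s % q = j)) ∪ Finset.range k := by
      intro s hs
      simp only [Finset.mem_filter, Finset.mem_range] at hs
      rcases Nat.lt_or_ge s k with hsk | hsk
      · exact Finset.mem_union_right _ (Finset.mem_range.mpr hsk)
      · apply Finset.mem_union_left
        rw [Finset.mem_filter]
        refine ⟨Finset.mem_range.mpr hs.1, ?_⟩
        have := hs.2
        show s % q = j
        rw [← seqS_mod hS hsk]
        exact this
    calc cntS S (Ecl k j) m
        ≤ (((Finset.range m).filter (fun s => s % q = j)) ∪ Finset.range k).card :=
          Finset.card_le_card hsub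
      _ ≤ c m + k := by
          refine le_trans (Finset.card_union_le _ _) ?_
          rw [Finset.card_range]
  apply nuS_eq_of_tendsto_atTop
  apply tendsto_of_tendsto_of_tendsto_of_le_of_le
    (g := fun m : ℕ => (c m : ℝ)/m - (k:ℝ)/m)
    (h := fun m : ℕ => (c m : ℝ)/m + (k:ℝ)/m)
  · simpa using (tendsto_freq_mod hq hj).sub (tendsto_const_div_atTop_nhds_zero_nat (k:ℝ))
  · simpa using (tendsto_freq_mod hq hj).add (tendsto_const_div_atTop_nhds_zero_nat (k:ℝ))
  · intro m
    rw [sub_le_iff_le_add, freqS]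
    have : (c m : ℝ) ≤ (cntS S (Ecl k j) m : ℝ) + k := by exact_mod_cast hcnt1 m
    calc (c m : ℝ)/m ≤ ((cntS S (Ecl k j) m : ℝ) + k)/m :=
          div_le_div_of_nonneg_right this (Nat.cast_nonneg m)
      _ = (cntS S (Ecl k j) m : ℝ)/m + (k:ℝ)/m := add_div _ _ _
  · intro m
    rw [freqS]
    have : (cntS S (Ecl k j) m : ℝ) ≤ (c m : ℝ) + k := by exact_mod_cast hcnt2 m
    calc (cntS S (Ecl k j) m : ℝ)/m ≤ ((c m : ℝ) + k)/m :=
          div_le_div_of_nonneg_right this (Nat.cast_nonneg m)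
      _ = (c m : ℝ)/m + (k:ℝ)/m := add_div _ _ _
end ecl


theorem cells_univ : Cells Set.univ := by
  intro k j hj
  rw [Set.univ_inter]
  exact Ecl_infinite hj

section step
variable (C P : ℕ → Set ℕ)

def goodF (t : ℕ) : Prop := ∃ Z : Set ℕ, Cells Z ∧ ∀ s, s ≤ t → (Z \ C s).Finite

open Classical in
noncomputable def Zf (t : ℕ) : Set ℕ := if h : goodF C t then h.choose else Set.univ

theorem Zf_cells (t : ℕ) : Cells (Zf C t) := by
  rw [Zf]; split_ifs with h
  · exact h.choose_spec.1
  · exact cells_univ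

theorem Zf_sub {t : ℕ} (h : goodF C t) : ∀ s, s ≤ t → (Zf C t \ C s).Finite := by
  rw [Zf, dif_pos h]; exact h.choose_spec.2

def kk (t : ℕ) : ℕ := (Nat.unpair t).1
def jj (t : ℕ) : ℕ := (Nat.unpair t).2 % 2^(kk t)

theorem jj_lt (t : ℕ) : jj t < 2^(kk t) :=
  Nat.mod_lt _ (Nat.two_pow_pos _)

/-- the set of points in pieces already met by a finite set F -/
def blocked (F : Set ℕ) : Set ℕ := ⋃ n ∈ {n | ∃ x ∈ F, x ∈ P n}, P n

theorem blocked_finite (hPd : Pairwise (Function.onFun Disjoint P))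
    (hPf : ∀ n, (P n).Finite) {F : Set ℕ} (hF : F.Finite) : (blocked P F).Finite := by
  apply Set.Finite.biUnion ?_ (fun n _ => hPf n)
  have hsub : {n | ∃ x ∈ F, x ∈ P n} ⊆ ⋃ x ∈ F, {n | x ∈ P n} := by
    rintro n ⟨x, hx, hxn⟩
    exact Set.mem_biUnion hx hxn
  refine Set.Finite.subset (Set.Finite.biUnion hF (fun x _ => ?_)) hsub
  apply Set.Subsingleton.finite
  intro a ha b hb
  by_contra hne
  exact Set.disjoint_left.mp (hPd hne) ha hb

open Classical in
noncomputable def pick (t : ℕ) : ℕ :=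
  if h : ∃ x, x ∈ Zf C t ∩ Ecl (kk t) (jj t) ∧ (∀ s, s < t → pick s < x) ∧
      (∀ s, s < t → ∀ n, pick s ∈ P n → x ∉ P n) ∧
      (goodF C t → ∀ s, s ≤ t → x ∈ C s)
  then h.choose else 0
termination_by t
decreasing_by all_goals omega

theorem pick_spec (hPd : Pairwise (Function.onFun Disjoint P)) (hPf : ∀ n, (P n).Finite)
    (t : ℕ) :
    pick C P t ∈ Zf C t ∩ Ecl (kk t) (jj t) ∧ (∀ s, s < t → pick C P s < pick C P t) ∧
      (∀ s, s < t → ∀ n, pick C P s ∈ P n → pick C P t ∉ P n) ∧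
      (goodF C t → ∀ s, s ≤ t → pick C P t ∈ C s) := by
  have hbase : (Zf C t ∩ Ecl (kk t) (jj t)).Infinite := Zf_cells C t (kk t) (jj t) (jj_lt t)
  have hex : ∃ x, x ∈ Zf C t ∩ Ecl (kk t) (jj t) ∧ (∀ s, s < t → pick C P s < x) ∧
      (∀ s, s < t → ∀ n, pick C P s ∈ P n → x ∉ P n) ∧
      (goodF C t → ∀ s, s ≤ t → x ∈ C s) := by
    set F : Set ℕ := (fun s => pick C P s) '' (Set.Iio t) with hF
    have hFfin : F.Finite := (Set.finite_Iio t).image _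
    have hbl : (blocked P F).Finite := blocked_finite P hPd hPf hFfin
    have hbd : ({y : ℕ | y ≤ (Finset.range t).sup (pick C P)}).Finite := Set.finite_Iic _
    by_cases hgood : goodF C t
    · have hZs : (⋃ s ∈ Set.Iic t, (Zf C t \ C s)).Finite :=
        Set.Finite.biUnion (Set.finite_Iic t) (fun s hs => Zf_sub C hgood s hs)
      have : ((Zf C t ∩ Ecl (kk t) (jj t)) \ (blocked P F ∪ {y | y ≤ (Finset.range t).sup (pick C P)}
          ∪ ⋃ s ∈ Set.Iic t, (Zf C t \ C s))).Infinite :=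
        hbase.diff (hbl.union hbd |>.union hZs)
      obtain ⟨x, hx1, hx2⟩ := this.nonempty
      simp only [Set.mem_union, not_or] at hx2
      obtain ⟨⟨hnb, hns⟩, hnz⟩ := hx2
      refine ⟨x, hx1, ?_, ?_, ?_⟩
      · intro s hs
        have : pick C P s ≤ (Finset.range t).sup (pick C P) :=
          Finset.le_sup (Finset.mem_range.mpr hs)
        have hxgt : ¬ x ≤ (Finset.range t).sup (pick C P) := hns
        omega
      · intro s hs n hsn hxn
        exact hnb (Set.mem_biUnion (show n ∈ {n | ∃ y ∈ F, y ∈ P n} from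
          ⟨pick C P s, ⟨s, hs, rfl⟩, hsn⟩) hxn)
      · intro _ s hs
        by_contra hxc
        exact hnz (Set.mem_biUnion hs ⟨hx1.1, hxc⟩)
    · have : ((Zf C t ∩ Ecl (kk t) (jj t)) \ (blocked P F ∪ {y | y ≤ (Finset.range t).sup (pick C P)})).Infinite :=
        hbase.diff (hbl.union hbd)
      obtain ⟨x, hx1, hx2⟩ := this.nonempty
      simp only [Set.mem_union, not_or] at hx2
      obtain ⟨hnb, hns⟩ := hx2
      refine ⟨x, hx1, ?_, ?_, fun hg => absurd hg hgood⟩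
      · intro s hs
        have : pick C P s ≤ (Finset.range t).sup (pick C P) :=
          Finset.le_sup (Finset.mem_range.mpr hs)
        have hxgt : ¬ x ≤ (Finset.range t).sup (pick C P) := hns
        omega
      · intro s hs n hsn hxn
        exact hnb (Set.mem_biUnion (show n ∈ {n | ∃ y ∈ F, y ∈ P n} from
          ⟨pick C P s, ⟨s, hs, rfl⟩, hsn⟩) hxn)
  rw [pick, dif_pos hex]
  exact hex.choose_spec

/-- output set of the step construction -/
def Tstep : Set ℕ := Set.range (pick C P)

theorem Tstep_spec (hPd : Pairwise (Function.onFun Disjoint P)) (hPf : ∀ n, (P n).Finite) :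
    Cells (Tstep C P) ∧ (∀ n, (Tstep C P ∩ P n).Subsingleton) ∧
      ((∀ t, goodF C t) → ∀ n, (Tstep C P \ C n).Finite) := by
  have hmono : StrictMono (pick C P) := fun s t h => ((pick_spec C P hPd hPf t).2.1 s h)
  refine ⟨?_, ?_, ?_⟩
  · intro k j hj
    apply Set.infinite_of_injective_forall_mem
      (f := fun i : ℕ => pick C P (Nat.pair k (j + 2^k * i)))
    · intro a b hab
      have h1 := hmono.injective hab
      have h2 := (Nat.pair_eq_pair.mp h1).2
      have h3 : (0:ℕ) < 2^k := Nat.two_pow_pos _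
      have h4 : 2^k * a = 2^k * b := by omega
      exact Nat.eq_of_mul_eq_mul_left h3 h4
    · intro i
      constructor
      · exact ⟨_, rfl⟩
      · have h1 : kk (Nat.pair k (j + 2^k * i)) = k := by
          rw [kk, Nat.unpair_pair]
        have h2 : jj (Nat.pair k (j + 2^k * i)) = j := by
          rw [jj, Nat.unpair_pair, h1]
          rw [Nat.add_mul_mod_self_left, Nat.mod_eq_of_lt hj]
        have := (pick_spec C P hPd hPf (Nat.pair k (j + 2^k * i))).1.2
        rwa [h1, h2] at this
  · intro n a ha b hb
    obtain ⟨⟨s, rfl⟩, han⟩ := ha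
    obtain ⟨⟨t, rfl⟩, hbn⟩ := hb
    rcases lt_trichotomy s t with h | h | h
    · exact absurd hbn ((pick_spec C P hPd hPf t).2.2.1 s h n han)
    · rw [h]
    · exact absurd han ((pick_spec C P hPd hPf s).2.2.1 t h n hbn)
  · intro hgood n
    have hsub : Tstep C P \ C n ⊆ (fun t => pick C P t) '' (Set.Iio n) := by
      rintro y ⟨⟨t, rfl⟩, hyc⟩
      rcases Nat.lt_or_ge t n with h | h
      · exact ⟨t, h, rfl⟩
      · exact absurd ((pick_spec C P hPd hPf t).2.2.2 (hgood t) n h) hyc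
    exact ((Set.finite_Iio n).image _).subset hsub
end step


section tower
variable {ι : Type} [LinearOrder ι] [WellFoundedLT ι]

noncomputable def enumIio (hcnt : ∀ i : ι, (Set.Iio i).Countable) (i : ι)
    (h : Nonempty {j : ι // j < i}) : ℕ → {j : ι // j < i} :=
  (@exists_surjective_nat {j : ι // j < i} h ((hcnt i).to_subtype)).choose

theorem enumIio_surj (hcnt : ∀ i : ι, (Set.Iio i).Countable) (i : ι)
    (h : Nonempty {j : ι // j < i}) : Function.Surjective (enumIio hcnt i h) :=
  (@exists_surjective_nat {j : ι // j < i} h ((hcnt i).to_subtype)).choose_spec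

open Classical in
noncomputable def Cfam (hcnt : ∀ i : ι, (Set.Iio i).Countable) (i : ι)
    (f : ∀ j : ι, j < i → Set ℕ) : ℕ → Set ℕ := fun n =>
  if h : Nonempty {j : ι // j < i} then f (enumIio hcnt i h n).1 (enumIio hcnt i h n).2
  else Set.univ

noncomputable def Tw (hcnt : ∀ i : ι, (Set.Iio i).Countable) (Pe : ι → ℕ → Set ℕ) : ι → Set ℕ :=
  (IsWellFounded.wf (α := ι) (r := (· < ·))).fix
    (fun i ih => Tstep (Cfam hcnt i ih) (Pe i))

theorem Tw_eq (hcnt : ∀ i : ι, (Set.Iio i).Countable) (Pe : ι → ℕ → Set ℕ) (i : ι) :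
    Tw hcnt Pe i = Tstep (Cfam hcnt i (fun j _ => Tw hcnt Pe j)) (Pe i) := by
  rw [Tw, WellFounded.fix_eq]

variable (hcnt : ∀ i : ι, (Set.Iio i).Countable) (Pe : ι → ℕ → Set ℕ)

theorem Tw_cells (hPd : ∀ i, Pairwise (Function.onFun Disjoint (Pe i)))
    (hPf : ∀ i n, (Pe i n).Finite) (i : ι) : Cells (Tw hcnt Pe i) := by
  rw [Tw_eq]
  exact (Tstep_spec _ _ (hPd i) (hPf i)).1

theorem Tw_selector (hPd : ∀ i, Pairwise (Function.onFun Disjoint (Pe i)))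
    (hPf : ∀ i n, (Pe i n).Finite) (i : ι) (n : ℕ) : ((Tw hcnt Pe i) ∩ Pe i n).Subsingleton := by
  rw [Tw_eq]
  exact (Tstep_spec _ _ (hPd i) (hPf i)).2.1 n

theorem Tw_mono (hPd : ∀ i, Pairwise (Function.onFun Disjoint (Pe i)))
    (hPf : ∀ i n, (Pe i n).Finite) : ∀ i j : ι, j < i → (Tw hcnt Pe i \ Tw hcnt Pe j).Finite := by
  intro i
  induction i using WellFoundedLT.induction with
  | ind i IH =>
    intro j hj
    have h : Nonempty {j' : ι // j' < i} := ⟨⟨j, hj⟩⟩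
    have hgood : ∀ t, goodF (Cfam hcnt i (fun j _ => Tw hcnt Pe j)) t := by
      intro t
      -- take the maximum index among the first t+1 members
      set g : ℕ → ι := fun n => (enumIio hcnt i h n).1 with hg
      have himg : ((Finset.range (t+1)).image g).Nonempty := by
        simp [Finset.Nonempty]
        exact ⟨0, Nat.zero_le t⟩
      set jmax : ι := ((Finset.range (t+1)).image g).max' himg with hjm
      have hjmax_lt : jmax < i := by
        have : jmax ∈ (Finset.range (t+1)).image g := Finset.max'_mem _ _
        obtain ⟨s, -, heq⟩ := Finset.mem_image.mp this
        rw [← heq]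
        exact (enumIio hcnt i h s).2
      refine ⟨Tw hcnt Pe jmax, Tw_cells hcnt Pe hPd hPf jmax, ?_⟩
      intro s hs
      have hCs : Cfam hcnt i (fun j _ => Tw hcnt Pe j) s = Tw hcnt Pe (g s) := by
        rw [Cfam, dif_pos h]
      rw [hCs]
      have hgs : g s ≤ jmax := Finset.le_max' _ _ (Finset.mem_image.mpr
        ⟨s, Finset.mem_range.mpr (by omega), rfl⟩)
      rcases eq_or_lt_of_le hgs with heq | hlt
      · rw [heq]; simp
      · exact IH jmax hjmax_lt (g s) hlt
    -- now use Tstep_spec third component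
    obtain ⟨n, hn⟩ := enumIio_surj hcnt i h ⟨j, hj⟩
    have hsub := (Tstep_spec (Cfam hcnt i (fun j _ => Tw hcnt Pe j)) (Pe i)
      (hPd i) (hPf i)).2.2 hgood n
    rw [← Tw_eq] at hsub
    have hCn : Cfam hcnt i (fun j _ => Tw hcnt Pe j) n = Tw hcnt Pe j := by
      rw [Cfam, dif_pos h, hn]
    rwa [hCn] at hsub
end tower

section wrappers
variable {S : Set ℕ}

theorem nuS_free (hS : Cells S) {A : Set ℕ} (hA : A.Finite) : nuS S A = 0 := by
  apply nuS_zero_of_finite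
  exact Set.Finite.preimage ((seqS_strictMono hS).injective.injOn) hA

theorem nuS_one_almost (hS : Cells S) {A : Set ℕ} (h : (S \ A).Finite) : nuS S A = 1 := by
  apply nuS_one_of_cofinite
  apply Set.Finite.subset (Set.Finite.preimage ((seqS_strictMono hS).injective.injOn) h)
  intro m hm
  exact ⟨seqS_mem hS m, hm⟩
end wrappers

theorem main_aux {ι : Type} [LinearOrder ι] [WellFoundedLT ι] [Nonempty ι]
    (hcnt : ∀ i : ι, (Set.Iio i).Countable)
    (Pe : ι → ℕ → Set ℕ)
    (hPd : ∀ i, Pairwise (Function.onFun Disjoint (Pe i)))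
    (hPf : ∀ i n, (Pe i n).Finite)
    (hsurj : ∀ Q : ℕ → Set ℕ, IsPartition Q → (∀ n, (Q n).Finite) → ∃ i, Pe i = Q) :
    ∃ μ : Set ℕ → ℝ, IsMeasure μ ∧ IsFree μ ∧ NonAtomic μ ∧ IsQMeasure μ := by
  classical
  set W : Ultrafilter ι := Ultrafilter.of atTop with hWdef
  have hW : (W : Filter ι) ≤ atTop := Ultrafilter.of_le _
  set T : ι → Set ℕ := Tw hcnt Pe with hT
  have hTcells : ∀ i, Cells (T i) := fun i => Tw_cells hcnt Pe hPd hPf i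
  set μ : Set ℕ → ℝ := fun A => ulim W (fun i => nuS (T i) A) with hμ
  have hbnd : ∀ A : Set ℕ, ∀ i, nuS (T i) A ∈ Set.Icc (0:ℝ) 1 := fun A i => nuS_mem _ _
  have htend : ∀ A : Set ℕ, Tendsto (fun i => nuS (T i) A) (W : Filter ι) (nhds (μ A)) :=
    fun A => ulim_spec _ _ (hbnd A)
  have hconst : ∀ (A : Set ℕ) (c : ℝ), (∀ i, nuS (T i) A = c) → μ A = c := by
    intro A c hc
    apply ulim_eq _ (hbnd A)
    exact Tendsto.congr (fun i => (hc i).symm) tendsto_const_nhds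
  refine ⟨μ, ⟨?_, ?_, ?_⟩, ?_, ?_, ?_⟩
  · intro A
    exact ⟨(ulim_mem _ _ (hbnd A)).1, (ulim_mem _ _ (hbnd A)).2⟩
  · exact hconst Set.univ 1 (fun i => nuS_univ (T i))
  · intro A B hAB
    apply ulim_eq _ (hbnd (A ∪ B))
    have := (htend A).add (htend B)
    exact Tendsto.congr (fun i => (nuS_union hAB).symm) this
  · intro A hA
    exact hconst A 0 (fun i => nuS_free (hTcells i) hA)
  · -- NonAtomic
    intro ε hε
    obtain ⟨k, hk⟩ := exists_pow_lt_of_lt_one hε (by norm_num : (1:ℝ)/2 < 1)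
    refine ⟨2^k, fun x => Ecl k x.val, ?_, ?_, ?_⟩
    · intro a b hab
      exact Ecl_disjoint (fun h => hab (Fin.ext h))
    · ext n
      simp only [Set.mem_iUnion, Set.mem_univ, iff_true]
      exact ⟨⟨n % 2^k, Nat.mod_lt _ (Nat.two_pow_pos _)⟩, Ecl_cover k n⟩
    · intro x
      have : μ (Ecl k x.val) = 1/((2^k : ℕ) : ℝ) :=
        hconst _ _ (fun i => nuS_Ecl (hTcells i) x.2)
      rw [this]
      have : (1:ℝ)/((2^k : ℕ) : ℝ) = (1/2)^k := by
        push_cast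
        rw [div_pow, one_pow]
      rw [this]
      exact hk
  · -- IsQMeasure
    intro A hA hAfin
    obtain ⟨i, hi⟩ := hsurj A hA hAfin
    refine ⟨T i, ?_, ?_⟩
    · intro n
      have := Tw_selector hcnt Pe hPd hPf i n
      rwa [hi] at this
    · apply ulim_eq _ (hbnd (T i))
      have hIci : Set.Ici i ∈ (W : Filter ι) := hW (Ici_mem_atTop i)
      have hev : ∀ᶠ i' in (W : Filter ι), nuS (T i') (T i) = 1 := by
        filter_upwards [hIci] with i' hi'
        rcases eq_or_lt_of_le (hi' : i ≤ i') with rfl | hlt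
        · exact nuS_one_almost (hTcells i) (by simp)
        · exact nuS_one_almost (hTcells i') (Tw_mono hcnt Pe hPd hPf i' i hlt)
      exact Tendsto.congr' (by filter_upwards [hev] with i' h using h.symm) tendsto_const_nhds


/-- Under CH there exists a non-atomic free Q-measure on ℕ. -/
theorem stmt_5 (hCH : CH) :
    ∃ μ : Set ℕ → ℝ, IsMeasure μ ∧ IsFree μ ∧ NonAtomic μ ∧ IsQMeasure μ := by
  classical
  set ι : Type := (Cardinal.aleph 1).ord.ToType with hι
  haveI : Nonempty ι := by
    rw [hι, Ordinal.toType_nonempty_iff_ne_zero, ne_eq, Cardinal.ord_eq_zero]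
    intro h
    exact absurd (h ▸ Cardinal.aleph0_lt_aleph_one) (by simp)
  have hcnt : ∀ i : ι, (Set.Iio i).Countable := by
    intro i
    rw [Cardinal.countable_iff_lt_aleph_one]
    exact Cardinal.mk_Iio_ord_toType i
  -- cardinality of the type of partitions into finite sets
  have hmkι : Cardinal.mk ι = Cardinal.aleph 1 := by
    rw [hι, Cardinal.mk_toType, Cardinal.card_ord]
  have hmkPT : Cardinal.mk {Q : ℕ → Set ℕ // IsPartition Q ∧ ∀ n, (Q n).Finite} ≤ Cardinal.mk ι := by
    refine le_trans (Cardinal.mk_subtype_le _) ?_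
    have h1 : Cardinal.mk (ℕ → Set ℕ) = ((2 : Cardinal) ^ Cardinal.aleph0) ^ Cardinal.aleph0 := by
      rw [← Cardinal.power_def, Cardinal.mk_set, Cardinal.mk_nat]
    rw [h1, ← Cardinal.power_mul, Cardinal.aleph0_mul_aleph0, hCH, hmkι]
  haveI hne : Nonempty {Q : ℕ → Set ℕ // IsPartition Q ∧ ∀ n, (Q n).Finite} := by
    refine ⟨⟨fun n => {n}, ⟨?_, ?_⟩, fun n => Set.finite_singleton n⟩⟩
    · intro a b hab
      simp only [Function.onFun, Set.disjoint_singleton_left, Set.mem_singleton_iff]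
      exact fun h => hab h
    · ext n
      simp
  obtain ⟨f⟩ := Cardinal.le_def _ _ |>.mp hmkPT
  have hesurj : Function.Surjective (Function.invFun f) :=
    Function.invFun_surjective f.injective
  set Pe : ι → ℕ → Set ℕ := fun i => (Function.invFun f i).val with hPe
  have hPd : ∀ i, Pairwise (Function.onFun Disjoint (Pe i)) :=
    fun i => (Function.invFun f i).2.1.1
  have hPf : ∀ i n, (Pe i n).Finite := fun i => (Function.invFun f i).2.2
  have hsurj : ∀ Q : ℕ → Set ℕ, IsPartition Q → (∀ n, (Q n).Finite) → ∃ i, Pe i = Q := by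
    intro Q hQ hQf
    obtain ⟨i, hi⟩ := hesurj ⟨Q, hQ, hQf⟩
    exact ⟨i, by rw [hPe]; simp only [hi]⟩
  exact main_aux hcnt Pe hPd hPf hsurj
end

section
/- Let 𝔡 be the least cardinality of a dominating family, i.e. of a set D ⊆ ℕ^ℕ such that for every g : ℕ → ℕ there is f ∈ D with g(n) ≤ f(n) for all but finitely many n, and let 𝔠 be the cardinality of the continuum. Then 𝔡 = 𝔠 if and only if the following holds: for every Boolean subalgebra 𝔹 of the powerset of ℕ with |𝔹| < 𝔠 and every finitely additive function μ : 𝔹 → [0,1] with μ(ℕ) = 1 which vanishes on all finite members of 𝔹, there is a free measure on all subsets of ℕ extending μ which is a P-measure. -/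
open Filter

/-- A Boolean subalgebra of the powerset of `ℕ`. -/
def IsSubalgebra (B : Set (Set ℕ)) : Prop :=
  ∅ ∈ B ∧ Set.univ ∈ B ∧ (∀ A ∈ B, Aᶜ ∈ B) ∧
    (∀ A ∈ B, ∀ C ∈ B, A ∪ C ∈ B) ∧ (∀ A ∈ B, ∀ C ∈ B, A ∩ C ∈ B)

/-- A finitely additive probability measure on a subalgebra `B` of the powerset of `ℕ`,
with values in `[0,1]`, vanishing on the finite members of `B`. -/
def IsPartialMeasure (B : Set (Set ℕ)) (μ : Set ℕ → ℝ) : Prop :=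
  (∀ A ∈ B, 0 ≤ μ A ∧ μ A ≤ 1) ∧ μ Set.univ = 1 ∧
    (∀ A ∈ B, ∀ C ∈ B, Disjoint A C → μ (A ∪ C) = μ A + μ C) ∧
    (∀ A ∈ B, A.Finite → μ A = 0)

/-- The dominating number `𝔡`: the least cardinality of a dominating family in `ℕ → ℕ`. -/
noncomputable def domNumber : Cardinal.{0} :=
  sInf { c : Cardinal.{0} | ∃ D : Set (ℕ → ℕ), Cardinal.mk ↥D = c ∧
    ∀ g : ℕ → ℕ, ∃ f ∈ D, ∀ᶠ n in atTop, g n ≤ f n }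

namespace Stmt7aux
open Set

/-- finitely additive probability "measure" defined (at least) on a subalgebra -/
def POn (𝒜 : Set (Set ℕ)) (m : Set ℕ → ℝ) : Prop :=
  (∀ A ∈ 𝒜, 0 ≤ m A) ∧ m Set.univ = 1 ∧
    ∀ A ∈ 𝒜, ∀ C ∈ 𝒜, Disjoint A C → m (A ∪ C) = m A + m C

variable {𝒜 : Set (Set ℕ)} {m : Set ℕ → ℝ}

lemma memDiff (h : IsSubalgebra 𝒜) {A C : Set ℕ} (hA : A ∈ 𝒜) (hC : C ∈ 𝒜) :
    A \ C ∈ 𝒜 := by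
  have := h.2.2.2.2 A hA Cᶜ (h.2.2.1 C hC)
  simpa [Set.diff_eq] using this

lemma isSubalgebra_univ : IsSubalgebra (Set.univ : Set (Set ℕ)) := by
  refine ⟨trivial, trivial, ?_, ?_, ?_⟩ <;> intros <;> trivial

lemma isMeasure_pOn {ν : Set ℕ → ℝ} (h : IsMeasure ν) : POn Set.univ ν :=
  ⟨fun A _ => (h.1 A).1, h.2.1, fun A _ C _ hd => h.2.2 A C hd⟩

lemma POn.empty (h𝒜 : IsSubalgebra 𝒜) (hm : POn 𝒜 m) : m ∅ = 0 := by
  have := hm.2.2 ∅ h𝒜.1 ∅ h𝒜.1 (by simp)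
  simp at this; linarith

lemma POn.diff_add (h𝒜 : IsSubalgebra 𝒜) (hm : POn 𝒜 m) {A C : Set ℕ}
    (hA : A ∈ 𝒜) (hC : C ∈ 𝒜) (hsub : C ⊆ A) : m C + m (A \ C) = m A := by
  have hd : Disjoint C (A \ C) := disjoint_sdiff_right
  have := hm.2.2 C hC (A \ C) (memDiff h𝒜 hA hC) hd
  rw [Set.union_diff_cancel hsub] at this
  linarith

lemma POn.mono (h𝒜 : IsSubalgebra 𝒜) (hm : POn 𝒜 m) {A C : Set ℕ}
    (hA : A ∈ 𝒜) (hC : C ∈ 𝒜) (hsub : C ⊆ A) : m C ≤ m A := by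
  have h1 := hm.diff_add h𝒜 hA hC hsub
  have h2 := hm.1 (A \ C) (memDiff h𝒜 hA hC)
  linarith

lemma POn.le_one (h𝒜 : IsSubalgebra 𝒜) (hm : POn 𝒜 m) {A : Set ℕ} (hA : A ∈ 𝒜) :
    m A ≤ 1 := by
  have := hm.mono h𝒜 h𝒜.2.1 hA (subset_univ A)
  linarith [hm.2.1]

lemma POn.compl (h𝒜 : IsSubalgebra 𝒜) (hm : POn 𝒜 m) {A : Set ℕ} (hA : A ∈ 𝒜) :
    m Aᶜ = 1 - m A := by
  have := hm.2.2 A hA Aᶜ (h𝒜.2.2.1 A hA) disjoint_compl_right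
  rw [Set.union_compl_self] at this
  rw [hm.2.1] at this; linarith

lemma POn.subadd (h𝒜 : IsSubalgebra 𝒜) (hm : POn 𝒜 m) {A C : Set ℕ}
    (hA : A ∈ 𝒜) (hC : C ∈ 𝒜) : m (A ∪ C) ≤ m A + m C := by
  have hd : Disjoint A (C \ A) := disjoint_sdiff_right
  have h1 := hm.2.2 A hA (C \ A) (memDiff h𝒜 hC hA) hd
  rw [Set.union_diff_self] at h1
  have h2 := hm.mono h𝒜 hC (memDiff h𝒜 hC hA) Set.diff_subset
  linarith

/-- finite additivity for finite unions -/
lemma POn.biUnion (h𝒜 : IsSubalgebra 𝒜) (hm : POn 𝒜 m) {A : ℕ → Set ℕ}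
    (hA : ∀ n, A n ∈ 𝒜) (hd : Pairwise (Function.onFun Disjoint A)) (N : ℕ) :
    (⋃ n ∈ Finset.range N, A n) ∈ 𝒜 ∧
      m (⋃ n ∈ Finset.range N, A n) = ∑ n ∈ Finset.range N, m (A n) := by
  induction N with
  | zero => simpa using hm.empty h𝒜 ▸ ⟨h𝒜.1, (hm.empty h𝒜).symm ▸ rfl⟩
  | succ N ih =>
    have hU : (⋃ n ∈ Finset.range N, A n) ∈ 𝒜 := ih.1
    have hdisj : Disjoint (⋃ n ∈ Finset.range N, A n) (A N) := by
      refine Set.disjoint_left.2 ?_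
      rintro x hx hxN
      simp only [Set.mem_iUnion, Finset.mem_range] at hx
      obtain ⟨n, hn, hxn⟩ := hx
      exact Set.disjoint_left.1 (hd (Nat.ne_of_lt hn)) hxn hxN
    have heq : (⋃ n ∈ Finset.range (N+1), A n) = (⋃ n ∈ Finset.range N, A n) ∪ A N := by
      ext x; simp only [Set.mem_iUnion, Set.mem_union, Finset.mem_range, exists_prop, Nat.lt_add_one_iff_lt_or_eq]
      constructor
      · rintro ⟨n, hn | rfl, hx⟩
        · exact Or.inl ⟨n, hn, hx⟩
        · exact Or.inr hx
      · rintro (⟨n, hn, hx⟩ | hx)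
        · exact ⟨n, Or.inl hn, hx⟩
        · exact ⟨N, Or.inr rfl, hx⟩
    refine ⟨heq ▸ h𝒜.2.2.2.1 _ hU _ (hA N), ?_⟩
    rw [heq, hm.2.2 _ hU _ (hA N) hdisj, ih.2, Finset.sum_range_succ]

end Stmt7aux

namespace Stmt7aux
open Set Cardinal

/-! ### Generated subalgebra and its cardinality -/

def clo (G : Set (Set ℕ)) : Set (Set ℕ) := ⋂₀ {𝒜 | IsSubalgebra 𝒜 ∧ G ⊆ 𝒜}

lemma isSubalgebra_clo (G : Set (Set ℕ)) : IsSubalgebra (clo G) := by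
  refine ⟨?_, ?_, ?_, ?_, ?_⟩
  · exact fun 𝒜 h𝒜 => h𝒜.1.1
  · exact fun 𝒜 h𝒜 => h𝒜.1.2.1
  · exact fun A hA 𝒜 h𝒜 => h𝒜.1.2.2.1 A (hA 𝒜 h𝒜)
  · exact fun A hA C hC 𝒜 h𝒜 => h𝒜.1.2.2.2.1 A (hA 𝒜 h𝒜) C (hC 𝒜 h𝒜)
  · exact fun A hA C hC 𝒜 h𝒜 => h𝒜.1.2.2.2.2 A (hA 𝒜 h𝒜) C (hC 𝒜 h𝒜)

lemma subset_clo (G : Set (Set ℕ)) : G ⊆ clo G := fun A hA 𝒜 h𝒜 => h𝒜.2 hA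

lemma clo_le {G 𝒜 : Set (Set ℕ)} (h𝒜 : IsSubalgebra 𝒜) (hG : G ⊆ 𝒜) : clo G ⊆ 𝒜 :=
  fun _ hA => hA 𝒜 ⟨h𝒜, hG⟩

lemma clo_mono {G G' : Set (Set ℕ)} (h : G ⊆ G') : clo G ⊆ clo G' :=
  fun A hA 𝒜 h𝒜 => hA 𝒜 ⟨h𝒜.1, h.trans h𝒜.2⟩

/-- evaluation map for a finite set of generators -/
def fcEval (t : Finset (Set ℕ)) (n : ℕ) : {A // A ∈ t} → Prop := fun A => n ∈ A.1

def finClo (t : Finset (Set ℕ)) : Set (Set ℕ) :=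
  Set.range (fun T : Set ({A // A ∈ t} → Prop) => fcEval t ⁻¹' T)

lemma finClo_subalgebra (t : Finset (Set ℕ)) : IsSubalgebra (finClo t) := by
  refine ⟨⟨∅, by simp⟩, ⟨Set.univ, by simp⟩, ?_, ?_, ?_⟩
  · rintro A ⟨T, rfl⟩; exact ⟨Tᶜ, rfl⟩
  · rintro A ⟨T, rfl⟩ C ⟨T', rfl⟩; exact ⟨T ∪ T', rfl⟩
  · rintro A ⟨T, rfl⟩ C ⟨T', rfl⟩; exact ⟨T ∩ T', rfl⟩

lemma mem_finClo {t : Finset (Set ℕ)} {A : Set ℕ} (hA : A ∈ t) : A ∈ finClo t := by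
  refine ⟨{f | f ⟨A, hA⟩}, ?_⟩
  ext n; simp [fcEval]

lemma finClo_mono {t t' : Finset (Set ℕ)} (h : t ⊆ t') : finClo t ⊆ finClo t' := by
  rintro A ⟨T, rfl⟩
  refine ⟨(fun f : {A // A ∈ t'} → Prop => fun B : {A // A ∈ t} => f ⟨B.1, h B.2⟩) ⁻¹' T, ?_⟩
  rfl

lemma finClo_countable (t : Finset (Set ℕ)) : (finClo t).Countable := by
  have : Finite (Set ({A // A ∈ t} → Prop)) := by infer_instance
  exact (Set.finite_range _).countable

def cloU (G : Set (Set ℕ)) : Set (Set ℕ) :=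
  ⋃ (t : {t : Finset (Set ℕ) // ↑t ⊆ G}), finClo t.1

lemma cloU_subalgebra (G : Set (Set ℕ)) : IsSubalgebra (cloU G) := by
  classical
  have hmem : ∀ (t : {t : Finset (Set ℕ) // ↑t ⊆ G}) {A : Set ℕ}, A ∈ finClo t.1 → A ∈ cloU G :=
    fun t {A} hA => Set.mem_iUnion.2 ⟨t, hA⟩
  refine ⟨hmem ⟨∅, by simp⟩ (finClo_subalgebra _).1,
          hmem ⟨∅, by simp⟩ (finClo_subalgebra _).2.1, ?_, ?_, ?_⟩
  · rintro A hA
    obtain ⟨t, hAt⟩ := Set.mem_iUnion.1 hA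
    exact hmem t ((finClo_subalgebra _).2.2.1 A hAt)
  · rintro A hA C hC
    obtain ⟨t, hAt⟩ := Set.mem_iUnion.1 hA
    obtain ⟨t', hCt⟩ := Set.mem_iUnion.1 hC
    refine hmem ⟨t.1 ∪ t'.1, by simp [t.2, t'.2]⟩ ?_
    exact (finClo_subalgebra _).2.2.2.1 A (finClo_mono Finset.subset_union_left hAt) C
      (finClo_mono Finset.subset_union_right hCt)
  · rintro A hA C hC
    obtain ⟨t, hAt⟩ := Set.mem_iUnion.1 hA
    obtain ⟨t', hCt⟩ := Set.mem_iUnion.1 hC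
    refine hmem ⟨t.1 ∪ t'.1, by simp [t.2, t'.2]⟩ ?_
    exact (finClo_subalgebra _).2.2.2.2 A (finClo_mono Finset.subset_union_left hAt) C
      (finClo_mono Finset.subset_union_right hCt)

lemma subset_cloU (G : Set (Set ℕ)) : G ⊆ cloU G := by
  intro A hA
  exact Set.mem_iUnion.2 ⟨⟨{A}, by simpa using hA⟩, mem_finClo (by simp)⟩

lemma clo_subset_cloU (G : Set (Set ℕ)) : clo G ⊆ cloU G :=
  clo_le (cloU_subalgebra G) (subset_cloU G)

lemma mk_finsetSub_le (G : Set (Set ℕ)) :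
    #{t : Finset (Set ℕ) // ↑t ⊆ G} ≤ max #↥G ℵ₀ := by
  classical
  have hinj : Function.Injective
      (fun t : {t : Finset (Set ℕ) // ↑t ⊆ G} => Finset.subtype (· ∈ G) t.1) := by
    rintro ⟨t, ht⟩ ⟨t', ht'⟩ h
    simp only [Subtype.mk.injEq] at h ⊢
    ext A
    constructor
    · intro hAt
      have : (⟨A, ht hAt⟩ : {x // x ∈ G}) ∈ Finset.subtype (· ∈ G) t := by
        simp [Finset.mem_subtype, hAt]
      rw [h] at this
      simpa [Finset.mem_subtype] using this
    · intro hAt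
      have : (⟨A, ht' hAt⟩ : {x // x ∈ G}) ∈ Finset.subtype (· ∈ G) t' := by
        simp [Finset.mem_subtype, hAt]
      rw [← h] at this
      simpa [Finset.mem_subtype] using this
  have h1 : #{t : Finset (Set ℕ) // ↑t ⊆ G} ≤ #(Finset ↥G) := mk_le_of_injective hinj
  rcases finite_or_infinite ↥G with hG | hG
  · have : Countable (Finset ↥G) := by infer_instance
    exact h1.trans ((mk_le_aleph0).trans (le_max_right _ _))
  · rw [mk_finset_of_infinite ↥G] at h1
    exact h1.trans (le_max_left _ _)

lemma mk_clo_le (G : Set (Set ℕ)) : #↥(clo G) ≤ max #↥G ℵ₀ := by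
  have h1 : #↥(clo G) ≤ #↥(cloU G) := mk_le_mk_of_subset (clo_subset_cloU G)
  have h2 : #↥(cloU G) ≤ #{t : Finset (Set ℕ) // ↑t ⊆ G} * ℵ₀ := by
    refine (mk_iUnion_le _).trans ?_
    gcongr
    exact ciSup_le' fun t => (finClo_countable t.1).le_aleph0
  refine h1.trans (h2.trans ?_)
  calc #{t : Finset (Set ℕ) // ↑t ⊆ G} * ℵ₀ ≤ max #↥G ℵ₀ * ℵ₀ := by
        gcongr; exact mk_finsetSub_le G
    _ ≤ max #↥G ℵ₀ := by
        rw [Cardinal.mul_eq_max (le_max_right _ _) le_rfl]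
        simp

lemma mk_clo_lt {G : Set (Set ℕ)} {c : Cardinal} (hG : #↥G < c) (hc : ℵ₀ < c) :
    #↥(clo G) < c :=
  lt_of_le_of_lt (mk_clo_le G) (max_lt hG hc)

end Stmt7aux

namespace Stmt7aux
open Set Cardinal

section Brep
variable {B : Set (Set ℕ)} {μ : Set ℕ → ℝ}

lemma pOn_of_partial (hμ : IsPartialMeasure B μ) : POn B μ :=
  ⟨fun A hA => (hμ.1 A hA).1, hμ.2.1, hμ.2.2.1⟩

lemma memSymmDiff {𝒜 : Set (Set ℕ)} (h : IsSubalgebra 𝒜) {A C : Set ℕ}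
    (hA : A ∈ 𝒜) (hC : C ∈ 𝒜) : symmDiff A C ∈ 𝒜 := by
  have : symmDiff A C = (A \ C) ∪ (C \ A) := by
    ext x; simp [Set.mem_symmDiff]; try tauto
  rw [this]
  exact h.2.2.2.1 _ (memDiff h hA hC) _ (memDiff h hC hA)

/-- the subalgebra generated by `B` and the finite sets -/
def Brep (B : Set (Set ℕ)) : Set (Set ℕ) := {X | ∃ C ∈ B, (symmDiff X C).Finite}

lemma mem_Brep_of_mem {A : Set ℕ} (hA : A ∈ B) : A ∈ Brep B :=
  ⟨A, hA, by simp⟩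

lemma mem_Brep_of_finite (hB : IsSubalgebra B) {A : Set ℕ} (hA : A.Finite) : A ∈ Brep B := by
  refine ⟨∅, hB.1, ?_⟩
  have : symmDiff A (∅ : Set ℕ) = A := by ext x; simp [Set.mem_symmDiff]
  rwa [this]

lemma Brep_subalgebra (hB : IsSubalgebra B) : IsSubalgebra (Brep B) := by
  refine ⟨mem_Brep_of_mem hB.1, mem_Brep_of_mem hB.2.1, ?_, ?_, ?_⟩
  · rintro A ⟨C, hC, hf⟩
    refine ⟨Cᶜ, hB.2.2.1 C hC, ?_⟩
    have : symmDiff Aᶜ Cᶜ = symmDiff A C := by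
      ext x; simp [Set.mem_symmDiff]; try tauto
    rwa [this]
  · rintro A ⟨C, hC, hf⟩ A' ⟨C', hC', hf'⟩
    refine ⟨C ∪ C', hB.2.2.2.1 C hC C' hC', (hf.union hf').subset ?_⟩
    intro x hx; simp [Set.mem_symmDiff] at hx ⊢; tauto
  · rintro A ⟨C, hC, hf⟩ A' ⟨C', hC', hf'⟩
    refine ⟨C ∩ C', hB.2.2.2.2 C hC C' hC', (hf.union hf').subset ?_⟩
    intro x hx; simp [Set.mem_symmDiff] at hx ⊢; tauto

lemma Brep_subset_clo (hB : IsSubalgebra B) :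
    Brep B ⊆ clo (B ∪ {A : Set ℕ | A.Finite}) := by
  rintro X ⟨C, hC, hf⟩
  have hXeq : X = symmDiff C (symmDiff X C) := by
    ext x; simp [Set.mem_symmDiff]; tauto
  rw [hXeq]
  exact memSymmDiff (isSubalgebra_clo _) (subset_clo _ (Or.inl hC))
    (subset_clo _ (Or.inr hf))

lemma Brep_welldef (hB : IsSubalgebra B) (hμ : IsPartialMeasure B μ) {X C C' : Set ℕ}
    (hC : C ∈ B) (hC' : C' ∈ B) (h1 : (symmDiff X C).Finite) (h2 : (symmDiff X C').Finite) :
    μ C = μ C' := by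
  have hpo := pOn_of_partial hμ
  have hsub : symmDiff C C' ⊆ (symmDiff X C) ∪ (symmDiff X C') := by
    intro x hx; simp [Set.mem_symmDiff] at hx ⊢; tauto
  have hfin : (symmDiff C C').Finite := (h1.union h2).subset hsub
  have hmem : symmDiff C C' ∈ B := memSymmDiff hB hC hC'
  have hzero : μ (symmDiff C C') = 0 := hμ.2.2.2 _ hmem hfin
  have hd1 : C \ C' ⊆ symmDiff C C' := by intro x hx; simp [Set.mem_symmDiff] at hx ⊢; tauto
  have hd2 : C' \ C ⊆ symmDiff C C' := by intro x hx; simp [Set.mem_symmDiff] at hx ⊢; tauto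
  have hz1 : μ (C \ C') = 0 := le_antisymm
    (hzero ▸ hpo.mono hB hmem (memDiff hB hC hC') hd1) (hpo.1 _ (memDiff hB hC hC'))
  have hz2 : μ (C' \ C) = 0 := le_antisymm
    (hzero ▸ hpo.mono hB hmem (memDiff hB hC' hC) hd2) (hpo.1 _ (memDiff hB hC' hC))
  have e1 : μ C = μ (C ∩ C') + μ (C \ C') := by
    have := hpo.2.2 (C ∩ C') (hB.2.2.2.2 C hC C' hC') (C \ C') (memDiff hB hC hC')
      (by rw [Set.disjoint_left]; intro x hx hx'; exact hx'.2 hx.2)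
    rwa [Set.inter_union_diff] at this
  have e2 : μ C' = μ (C' ∩ C) + μ (C' \ C) := by
    have := hpo.2.2 (C' ∩ C) (hB.2.2.2.2 C' hC' C hC) (C' \ C) (memDiff hB hC' hC)
      (by rw [Set.disjoint_left]; intro x hx hx'; exact hx'.2 hx.2)
    rwa [Set.inter_union_diff] at this
  rw [e1, e2, hz1, hz2, Set.inter_comm]

open scoped Classical in
/-- extension of `μ` to `Brep B` -/
noncomputable def muB (B : Set (Set ℕ)) (μ : Set ℕ → ℝ) : Set ℕ → ℝ := fun X =>
  if h : X ∈ Brep B then μ h.choose else 0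

lemma muB_spec (hB : IsSubalgebra B) (hμ : IsPartialMeasure B μ) {X C : Set ℕ}
    (hC : C ∈ B) (hf : (symmDiff X C).Finite) : muB B μ X = μ C := by
  have hX : X ∈ Brep B := ⟨C, hC, hf⟩
  rw [muB, dif_pos hX]
  exact Brep_welldef hB hμ hX.choose_spec.1 hC hX.choose_spec.2 hf

lemma muB_extends (hB : IsSubalgebra B) (hμ : IsPartialMeasure B μ) {C : Set ℕ}
    (hC : C ∈ B) : muB B μ C = μ C := by
  refine muB_spec hB hμ hC ?_
  have : symmDiff C C = (∅ : Set ℕ) := by ext x; simp [Set.mem_symmDiff]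
  rw [this]; exact Set.finite_empty

lemma muB_finite (hB : IsSubalgebra B) (hμ : IsPartialMeasure B μ) {X : Set ℕ}
    (hX : X.Finite) : muB B μ X = 0 := by
  have h : (symmDiff X (∅ : Set ℕ)).Finite := by
    have : symmDiff X (∅ : Set ℕ) = X := by ext x; simp [Set.mem_symmDiff]
    rw [this]; exact hX
  rw [muB_spec hB hμ hB.1 h]
  exact (pOn_of_partial hμ).empty hB

lemma muB_pOn (hB : IsSubalgebra B) (hμ : IsPartialMeasure B μ) :
    POn (Brep B) (muB B μ) := by
  have hpo := pOn_of_partial hμ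
  refine ⟨?_, ?_, ?_⟩
  · rintro A ⟨C, hC, hf⟩
    rw [muB_spec hB hμ hC hf]; exact hpo.1 C hC
  · rw [muB_extends hB hμ hB.2.1, hμ.2.1]
  · rintro A ⟨C, hC, hf⟩ A' ⟨C', hC', hf'⟩ hd
    have hCC' : (C ∩ C').Finite := by
      refine ((hf.union hf').subset ?_)
      intro x hx
      have hxC : x ∈ C := hx.1
      have hxC' : x ∈ C' := hx.2
      by_cases hxA : x ∈ A
      · have hxA' : x ∉ A' := fun h => Set.disjoint_left.1 hd hxA h
        exact Set.mem_union_right _ (by simp [Set.mem_symmDiff]; tauto)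
      · exact Set.mem_union_left _ (by simp [Set.mem_symmDiff]; tauto)
    have hzCC' : μ (C ∩ C') = 0 := hμ.2.2.2 _ (hB.2.2.2.2 C hC C' hC') hCC'
    have hu : (symmDiff (A ∪ A') (C ∪ C')).Finite := by
      refine (hf.union hf').subset ?_
      intro x hx; simp [Set.mem_symmDiff] at hx ⊢; tauto
    rw [muB_spec hB hμ (hB.2.2.2.1 C hC C' hC') hu, muB_spec hB hμ hC hf,
      muB_spec hB hμ hC' hf']
    -- μ (C ∪ C') = μ C + μ C'
    have e1 : μ (C ∪ C') = μ (C \ C') + μ C' := by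
      have := hpo.2.2 (C \ C') (memDiff hB hC hC') C' hC' disjoint_sdiff_left
      rwa [Set.diff_union_self] at this
    have e2 : μ C = μ (C ∩ C') + μ (C \ C') := by
      have := hpo.2.2 (C ∩ C') (hB.2.2.2.2 C hC C' hC') (C \ C') (memDiff hB hC hC')
        (by rw [Set.disjoint_left]; intro x hx hx'; exact hx'.2 hx.2)
      rwa [Set.inter_union_diff] at this
    linarith

lemma mk_Brep_le (B : Set (Set ℕ)) : #↥(Brep B) ≤ max #↥B ℵ₀ := by
  have hsub : Brep B ⊆ (fun p : Set ℕ × Set ℕ => symmDiff p.1 p.2) ''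
      (B ×ˢ {F : Set ℕ | F.Finite}) := by
    rintro X ⟨C, hC, hf⟩
    refine ⟨⟨C, symmDiff X C⟩, ⟨hC, hf⟩, ?_⟩
    simp only
    rw [symmDiff_comm X C, ← symmDiff_assoc]
    simp
  refine (mk_le_mk_of_subset hsub).trans (mk_image_le.trans ?_)
  rw [mk_congr (Equiv.Set.prod B {F : Set ℕ | F.Finite}), mk_prod]
  have hfin : #↥{F : Set ℕ | F.Finite} ≤ ℵ₀ := by
    have hinj : Function.Injective (fun F : {F : Set ℕ | F.Finite} => F.2.toFinset) := by
      rintro ⟨F, hF⟩ ⟨F', hF'⟩ h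
      simp only [Subtype.mk.injEq]
      have := congrArg (fun t : Finset ℕ => (t : Set ℕ)) h
      simpa [Set.Finite.coe_toFinset] using this
    refine (mk_le_of_injective hinj).trans ?_
    rw [mk_finset_of_infinite ℕ, mk_nat]
  simp only [lift_id]
  calc #↥B * #↥{F : Set ℕ | F.Finite} ≤ max #↥B ℵ₀ * ℵ₀ :=
        mul_le_mul' (le_max_left _ _) hfin
    _ ≤ max #↥B ℵ₀ := by rw [Cardinal.mul_eq_max (le_max_right _ _) le_rfl]; simp

end Brep
end Stmt7aux

namespace Stmt7aux
open Set

section Step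
variable (𝒜 : Set (Set ℕ)) (m : Set ℕ → ℝ) (X : Set ℕ)

def outSet (C : Set ℕ) : Set ℝ := {r | ∃ D, D ∈ 𝒜 ∧ C ∩ X ⊆ D ∧ r = m D}
def inSet (C : Set ℕ) : Set ℝ := {r | ∃ E, E ∈ 𝒜 ∧ E ⊆ C \ X ∧ r = m E}

noncomputable def gOut (C : Set ℕ) : ℝ := sInf (outSet 𝒜 m X C)
noncomputable def gIn (C : Set ℕ) : ℝ := sSup (inSet 𝒜 m X C)

def algX : Set (Set ℕ) := {Y | ∃ C₁, C₁ ∈ 𝒜 ∧ ∃ C₂, C₂ ∈ 𝒜 ∧ Y = (C₁ ∩ X) ∪ (C₂ \ X)}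

variable {𝒜 m X}
variable (h𝒜 : IsSubalgebra 𝒜) (hm : POn 𝒜 m)
include h𝒜 hm

section
omit hm
lemma outSet_nonempty (C : Set ℕ) : (outSet 𝒜 m X C).Nonempty :=
  ⟨m Set.univ, Set.univ, h𝒜.2.1, Set.subset_univ _, rfl⟩

lemma inSet_nonempty (C : Set ℕ) : (inSet 𝒜 m X C).Nonempty :=
  ⟨m ∅, ∅, h𝒜.1, Set.empty_subset _, rfl⟩
end

lemma outSet_bddBelow (C : Set ℕ) : BddBelow (outSet 𝒜 m X C) := by
  refine ⟨0, ?_⟩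
  rintro r ⟨D, hD, _, rfl⟩
  exact hm.1 D hD

lemma inSet_bddAbove (C : Set ℕ) : BddAbove (inSet 𝒜 m X C) := by
  refine ⟨1, ?_⟩
  rintro r ⟨E, hE, _, rfl⟩
  exact hm.le_one h𝒜 hE

lemma gOut_nonneg (C : Set ℕ) : 0 ≤ gOut 𝒜 m X C :=
  le_csInf (outSet_nonempty h𝒜 C) (by rintro r ⟨D, hD, _, rfl⟩; exact hm.1 D hD)

lemma gIn_nonneg (C : Set ℕ) : 0 ≤ gIn 𝒜 m X C := by
  have h0 : m ∅ ∈ inSet 𝒜 m X C := ⟨∅, h𝒜.1, Set.empty_subset _, rfl⟩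
  have := le_csSup (inSet_bddAbove h𝒜 hm C) h0
  rwa [hm.empty h𝒜] at this

lemma gOut_le {C D : Set ℕ} (hD : D ∈ 𝒜) (hsub : C ∩ X ⊆ D) : gOut 𝒜 m X C ≤ m D :=
  csInf_le (outSet_bddBelow h𝒜 hm C) ⟨D, hD, hsub, rfl⟩

lemma le_gIn {C E : Set ℕ} (hE : E ∈ 𝒜) (hsub : E ⊆ C \ X) : m E ≤ gIn 𝒜 m X C :=
  le_csSup (inSet_bddAbove h𝒜 hm C) ⟨E, hE, hsub, rfl⟩

section
omit h𝒜 hm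
lemma gOut_congr {C C' : Set ℕ} (h : C ∩ X = C' ∩ X) : gOut 𝒜 m X C = gOut 𝒜 m X C' := by
  unfold gOut outSet; rw [h]

lemma gIn_congr {C C' : Set ℕ} (h : C \ X = C' \ X) : gIn 𝒜 m X C = gIn 𝒜 m X C' := by
  unfold gIn inSet; rw [h]
end

lemma gIn_eq {C : Set ℕ} (hC : C ∈ 𝒜) : gIn 𝒜 m X C = m C - gOut 𝒜 m X C := by
  have hle : gIn 𝒜 m X C ≤ m C - gOut 𝒜 m X C := by
    refine csSup_le (inSet_nonempty h𝒜 C) ?_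
    rintro r ⟨E, hE, hsub, rfl⟩
    have hEC : E ⊆ C := hsub.trans Set.diff_subset
    have hd : C ∩ X ⊆ C \ E := by
      intro x hx
      refine ⟨hx.1, fun hxE => ?_⟩
      exact (hsub hxE).2 hx.2
    have h1 : gOut 𝒜 m X C ≤ m (C \ E) := gOut_le h𝒜 hm (memDiff h𝒜 hC hE) hd
    have h2 : m E + m (C \ E) = m C := hm.diff_add h𝒜 hC hE hEC
    linarith
  have hge : m C - gOut 𝒜 m X C ≤ gIn 𝒜 m X C := by
    have : m C - gIn 𝒜 m X C ≤ gOut 𝒜 m X C := by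
      refine le_csInf (outSet_nonempty h𝒜 C) ?_
      rintro r ⟨D, hD, hsub, rfl⟩
      have hE : C \ D ⊆ C \ X := by
        intro x hx
        exact ⟨hx.1, fun hxX => hx.2 (hsub ⟨hx.1, hxX⟩)⟩
      have h1 : m (C \ D) ≤ gIn 𝒜 m X C := le_gIn h𝒜 hm (memDiff h𝒜 hC hD) hE
      -- m C ≤ m D + m (C \ D)
      have h2 : m (C ∩ D) + m (C \ D) = m C := by
        have := hm.diff_add h𝒜 hC (h𝒜.2.2.2.2 C hC D hD) Set.inter_subset_left
        rwa [Set.diff_self_inter] at this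
      have h3 : m (C ∩ D) ≤ m D := hm.mono h𝒜 hD (h𝒜.2.2.2.2 C hC D hD)
        Set.inter_subset_right
      linarith
    linarith
  linarith

lemma gOut_add {C C' : Set ℕ} (hC : C ∈ 𝒜) (hC' : C' ∈ 𝒜) (hd : Disjoint C C') :
    gOut 𝒜 m X (C ∪ C') = gOut 𝒜 m X C + gOut 𝒜 m X C' := by
  have hle : gOut 𝒜 m X (C ∪ C') ≤ gOut 𝒜 m X C + gOut 𝒜 m X C' := by
    have key : ∀ r ∈ outSet 𝒜 m X C, ∀ r' ∈ outSet 𝒜 m X C',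
        gOut 𝒜 m X (C ∪ C') ≤ r + r' := by
      rintro r ⟨D, hD, hsub, rfl⟩ r' ⟨D', hD', hsub', rfl⟩
      have h1 : gOut 𝒜 m X (C ∪ C') ≤ m (D ∪ D') := by
        refine gOut_le h𝒜 hm (h𝒜.2.2.2.1 D hD D' hD') ?_
        rintro x ⟨hx, hxX⟩
        rcases hx with hx | hx
        · exact Or.inl (hsub ⟨hx, hxX⟩)
        · exact Or.inr (hsub' ⟨hx, hxX⟩)
      exact h1.trans (hm.subadd h𝒜 hD hD')
    -- infimum manipulation
    by_contra hlt
    push_neg at hlt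
    obtain ⟨r, hr, hrlt⟩ := exists_lt_of_csInf_lt (outSet_nonempty h𝒜 C)
      (show gOut 𝒜 m X (C ∪ C') - gOut 𝒜 m X C' > gOut 𝒜 m X C by linarith)
    obtain ⟨r', hr', hrlt'⟩ := exists_lt_of_csInf_lt (outSet_nonempty h𝒜 C')
      (show gOut 𝒜 m X (C ∪ C') - r > gOut 𝒜 m X C' by linarith)
    have := key r hr r' hr'
    linarith
  have hge : gOut 𝒜 m X C + gOut 𝒜 m X C' ≤ gOut 𝒜 m X (C ∪ C') := by
    refine le_csInf (outSet_nonempty h𝒜 _) ?_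
    rintro r ⟨D, hD, hsub, rfl⟩
    have h1 : gOut 𝒜 m X C ≤ m (D ∩ C) := by
      refine gOut_le h𝒜 hm (h𝒜.2.2.2.2 D hD C hC) ?_
      rintro x ⟨hx, hxX⟩
      exact ⟨hsub ⟨Or.inl hx, hxX⟩, hx⟩
    have h2 : gOut 𝒜 m X C' ≤ m (D ∩ C') := by
      refine gOut_le h𝒜 hm (h𝒜.2.2.2.2 D hD C' hC') ?_
      rintro x ⟨hx, hxX⟩
      exact ⟨hsub ⟨Or.inr hx, hxX⟩, hx⟩
    have h3 : m (D ∩ C) + m (D ∩ C') = m ((D ∩ C) ∪ (D ∩ C')) := by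
      refine (hm.2.2 _ (h𝒜.2.2.2.2 D hD C hC) _ (h𝒜.2.2.2.2 D hD C' hC') ?_).symm
      exact (hd.mono Set.inter_subset_right Set.inter_subset_right)
    have h4 : m ((D ∩ C) ∪ (D ∩ C')) ≤ m D := by
      refine hm.mono h𝒜 hD (h𝒜.2.2.2.1 _ (h𝒜.2.2.2.2 D hD C hC) _ (h𝒜.2.2.2.2 D hD C' hC')) ?_
      rintro x (hx | hx) <;> exact hx.1
    linarith
  linarith

lemma gIn_add {C C' : Set ℕ} (hC : C ∈ 𝒜) (hC' : C' ∈ 𝒜)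
    (hd : Disjoint (C \ X) (C' \ X)) :
    gIn 𝒜 m X (C ∪ C') = gIn 𝒜 m X C + gIn 𝒜 m X C' := by
  have hle : gIn 𝒜 m X (C ∪ C') ≤ gIn 𝒜 m X C + gIn 𝒜 m X C' := by
    refine csSup_le (inSet_nonempty h𝒜 _) ?_
    rintro r ⟨E, hE, hsub, rfl⟩
    have h1 : E ∩ C ⊆ C \ X := by
      rintro x ⟨hxE, hxC⟩
      exact ⟨hxC, (hsub hxE).2⟩
    have h2 : E \ C ⊆ C' \ X := by
      rintro x ⟨hxE, hxC⟩
      rcases (hsub hxE).1 with h | h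
      · exact absurd h hxC
      · exact ⟨h, (hsub hxE).2⟩
    have e1 : m (E ∩ C) + m (E \ C) = m E := by
      have := hm.diff_add h𝒜 hE (h𝒜.2.2.2.2 E hE C hC) Set.inter_subset_left
      rwa [Set.diff_self_inter] at this
    have g1 : m (E ∩ C) ≤ gIn 𝒜 m X C := le_gIn h𝒜 hm (h𝒜.2.2.2.2 E hE C hC) h1
    have g2 : m (E \ C) ≤ gIn 𝒜 m X C' := le_gIn h𝒜 hm (memDiff h𝒜 hE hC) h2
    linarith
  have hge : gIn 𝒜 m X C + gIn 𝒜 m X C' ≤ gIn 𝒜 m X (C ∪ C') := by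
    have key : ∀ r ∈ inSet 𝒜 m X C, ∀ r' ∈ inSet 𝒜 m X C',
        r + r' ≤ gIn 𝒜 m X (C ∪ C') := by
      rintro r ⟨E, hE, hsub, rfl⟩ r' ⟨E', hE', hsub', rfl⟩
      have hdEE : Disjoint E E' := hd.mono hsub hsub'
      have hadd := hm.2.2 E hE E' hE' hdEE
      have hsubU : E ∪ E' ⊆ (C ∪ C') \ X := by
        rintro x (hx | hx)
        · exact ⟨Or.inl (hsub hx).1, (hsub hx).2⟩
        · exact ⟨Or.inr (hsub' hx).1, (hsub' hx).2⟩
      have := le_gIn h𝒜 hm (h𝒜.2.2.2.1 E hE E' hE') hsubU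
      linarith
    by_contra hlt
    push_neg at hlt
    obtain ⟨r, hr, hrlt⟩ := exists_lt_of_lt_csSup (inSet_nonempty h𝒜 C)
      (show gIn 𝒜 m X (C ∪ C') - gIn 𝒜 m X C' < gIn 𝒜 m X C by linarith)
    obtain ⟨r', hr', hrlt'⟩ := exists_lt_of_lt_csSup (inSet_nonempty h𝒜 C')
      (show gIn 𝒜 m X (C ∪ C') - r < gIn 𝒜 m X C' by linarith)
    have := key r hr r' hr'
    linarith
  linarith

end Step
end Stmt7aux

namespace Stmt7aux
open Set

section Step2
variable {𝒜 : Set (Set ℕ)} {m : Set ℕ → ℝ} {X : Set ℕ}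

lemma mem_algX (hC₁ : C₁ ∈ 𝒜) (hC₂ : C₂ ∈ 𝒜) : (C₁ ∩ X) ∪ (C₂ \ X) ∈ algX 𝒜 X :=
  ⟨C₁, hC₁, C₂, hC₂, rfl⟩

lemma algX_inter_X {C₁ C₂ : Set ℕ} : ((C₁ ∩ X) ∪ (C₂ \ X)) ∩ X = C₁ ∩ X := by
  ext x; simp only [Set.mem_inter_iff, Set.mem_union, Set.mem_diff]; tauto

lemma algX_diff_X {C₁ C₂ : Set ℕ} : ((C₁ ∩ X) ∪ (C₂ \ X)) \ X = C₂ \ X := by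
  ext x; simp only [Set.mem_diff, Set.mem_union, Set.mem_inter_iff]; tauto

lemma subset_algX (h𝒜 : IsSubalgebra 𝒜) : 𝒜 ⊆ algX 𝒜 X := by
  intro C hC
  refine ⟨C, hC, C, hC, ?_⟩
  ext x; simp only [Set.mem_union, Set.mem_inter_iff, Set.mem_diff]; tauto

lemma X_mem_algX (h𝒜 : IsSubalgebra 𝒜) : X ∈ algX 𝒜 X := by
  refine ⟨Set.univ, h𝒜.2.1, ∅, h𝒜.1, ?_⟩
  ext x; simp

lemma algX_subalgebra (h𝒜 : IsSubalgebra 𝒜) : IsSubalgebra (algX 𝒜 X) := by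
  refine ⟨subset_algX h𝒜 h𝒜.1, subset_algX h𝒜 h𝒜.2.1, ?_, ?_, ?_⟩
  · rintro Y ⟨C₁, hC₁, C₂, hC₂, rfl⟩
    refine ⟨C₁ᶜ, h𝒜.2.2.1 C₁ hC₁, C₂ᶜ, h𝒜.2.2.1 C₂ hC₂, ?_⟩
    ext x
    simp only [Set.mem_compl_iff, Set.mem_union, Set.mem_inter_iff, Set.mem_diff]
    by_cases hx : x ∈ X <;> tauto
  · rintro Y ⟨C₁, hC₁, C₂, hC₂, rfl⟩ Y' ⟨C₁', hC₁', C₂', hC₂', rfl⟩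
    refine ⟨C₁ ∪ C₁', h𝒜.2.2.2.1 _ hC₁ _ hC₁', C₂ ∪ C₂', h𝒜.2.2.2.1 _ hC₂ _ hC₂', ?_⟩
    ext x
    simp only [Set.mem_union, Set.mem_inter_iff, Set.mem_diff]
    by_cases hx : x ∈ X <;> tauto
  · rintro Y ⟨C₁, hC₁, C₂, hC₂, rfl⟩ Y' ⟨C₁', hC₁', C₂', hC₂', rfl⟩
    refine ⟨C₁ ∩ C₁', h𝒜.2.2.2.2 _ hC₁ _ hC₁', C₂ ∩ C₂', h𝒜.2.2.2.2 _ hC₂ _ hC₂', ?_⟩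
    ext x
    simp only [Set.mem_union, Set.mem_inter_iff, Set.mem_diff]
    by_cases hx : x ∈ X <;> tauto

variable (𝒜 m X) in
open scoped Classical in
noncomputable def mX : Set ℕ → ℝ := fun Y =>
  if h : Y ∈ algX 𝒜 X then
    gOut 𝒜 m X h.choose + gIn 𝒜 m X h.choose_spec.2.choose
  else 0

lemma mX_spec {Y C₁ C₂ : Set ℕ} (hC₁ : C₁ ∈ 𝒜) (hC₂ : C₂ ∈ 𝒜)
    (hY : Y = (C₁ ∩ X) ∪ (C₂ \ X)) :
    mX 𝒜 m X Y = gOut 𝒜 m X C₁ + gIn 𝒜 m X C₂ := by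
  have hYmem : Y ∈ algX 𝒜 X := ⟨C₁, hC₁, C₂, hC₂, hY⟩
  rw [mX, dif_pos hYmem]
  set D₁ := hYmem.choose
  set D₂ := hYmem.choose_spec.2.choose
  have hspec := hYmem.choose_spec.2.choose_spec.2
  have h1 : D₁ ∩ X = C₁ ∩ X := by
    have e1 : Y ∩ X = D₁ ∩ X := by rw [hspec]; exact algX_inter_X
    have e2 : Y ∩ X = C₁ ∩ X := by rw [hY]; exact algX_inter_X
    rw [← e1, e2]
  have h2 : D₂ \ X = C₂ \ X := by
    have e1 : Y \ X = D₂ \ X := by rw [hspec]; exact algX_diff_X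
    have e2 : Y \ X = C₂ \ X := by rw [hY]; exact algX_diff_X
    rw [← e1, e2]
  rw [gOut_congr h1, gIn_congr h2]

variable (h𝒜 : IsSubalgebra 𝒜) (hm : POn 𝒜 m)
include h𝒜 hm

lemma gIn_empty : gIn 𝒜 m X ∅ = 0 := by
  apply le_antisymm
  · refine csSup_le (inSet_nonempty h𝒜 ∅) ?_
    rintro r ⟨E, hE, hsub, rfl⟩
    have : E = ∅ := by
      rw [Set.eq_empty_iff_forall_notMem]
      intro x hx
      exact ((Set.empty_diff X) ▸ hsub) hx
    rw [this, hm.empty h𝒜]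
  · exact gIn_nonneg h𝒜 hm ∅

lemma mX_extends {C : Set ℕ} (hC : C ∈ 𝒜) : mX 𝒜 m X C = m C := by
  rw [mX_spec hC hC (by ext x; simp only [Set.mem_union, Set.mem_inter_iff, Set.mem_diff]; tauto),
    gIn_eq h𝒜 hm hC]
  ring

lemma mX_val : mX 𝒜 m X X = sInf {r | ∃ D, D ∈ 𝒜 ∧ X ⊆ D ∧ r = m D} := by
  rw [mX_spec h𝒜.2.1 h𝒜.1 (by ext x; simp), gIn_empty h𝒜 hm]
  have : outSet 𝒜 m X Set.univ = {r | ∃ D, D ∈ 𝒜 ∧ X ⊆ D ∧ r = m D} := by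
    unfold outSet; rw [Set.univ_inter]
  rw [add_zero, gOut, this]

lemma mX_pOn : POn (algX 𝒜 X) (mX 𝒜 m X) := by
  refine ⟨?_, ?_, ?_⟩
  · rintro Y ⟨C₁, hC₁, C₂, hC₂, rfl⟩
    rw [mX_spec hC₁ hC₂ rfl]
    exact add_nonneg (gOut_nonneg h𝒜 hm C₁) (gIn_nonneg h𝒜 hm C₂)
  · rw [mX_extends h𝒜 hm h𝒜.2.1, hm.2.1]
  · rintro Y ⟨C₁, hC₁, C₂, hC₂, rfl⟩ Y' ⟨C₁', hC₁', C₂', hC₂', rfl⟩ hd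
    set D₁ := C₁' \ C₁ with hD₁def
    have hD₁ : D₁ ∈ 𝒜 := memDiff h𝒜 hC₁' hC₁
    have htr : C₁ ∩ C₁' ∩ X = ∅ := by
      rw [Set.eq_empty_iff_forall_notMem]
      rintro x ⟨⟨h1, h2⟩, hX⟩
      exact Set.disjoint_left.1 hd (Or.inl ⟨h1, hX⟩) (Or.inl ⟨h2, hX⟩)
    have hD₁tr : D₁ ∩ X = C₁' ∩ X := by
      ext x
      simp only [hD₁def, Set.mem_inter_iff, Set.mem_diff]
      constructor
      · rintro ⟨⟨h1, _⟩, h2⟩; exact ⟨h1, h2⟩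
      · rintro ⟨h1, h2⟩
        refine ⟨⟨h1, fun hC₁x => ?_⟩, h2⟩
        have : x ∈ C₁ ∩ C₁' ∩ X := ⟨⟨hC₁x, h1⟩, h2⟩
        rw [htr] at this
        exact this
    have hrep : (C₁ ∩ X ∪ C₂ \ X) ∪ (C₁' ∩ X ∪ C₂' \ X)
        = ((C₁ ∪ D₁) ∩ X) ∪ ((C₂ ∪ C₂') \ X) := by
      have : (C₁ ∪ D₁) ∩ X = (C₁ ∩ X) ∪ (C₁' ∩ X) := by
        rw [Set.union_inter_distrib_right, hD₁tr]
      rw [this]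
      ext x; simp only [Set.mem_union, Set.mem_inter_iff, Set.mem_diff]; tauto
    rw [mX_spec hC₁ hC₂ rfl, mX_spec hC₁' hC₂' rfl,
      mX_spec (h𝒜.2.2.2.1 _ hC₁ _ hD₁) (h𝒜.2.2.2.1 _ hC₂ _ hC₂') hrep]
    have hdisj1 : Disjoint C₁ D₁ := disjoint_sdiff_right
    have hdisj2 : Disjoint (C₂ \ X) (C₂' \ X) := by
      refine hd.mono ?_ ?_
      · intro x hx; exact Or.inr hx
      · intro x hx; exact Or.inr hx
    rw [gOut_add h𝒜 hm hC₁ hD₁ hdisj1, gIn_add h𝒜 hm hC₂ hC₂' hdisj2, gOut_congr hD₁tr]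
    ring

omit h𝒜 hm in
/-- One-step extension of a partial measure, giving the new set its outer measure. -/
lemma stepExt (h𝒜 : IsSubalgebra 𝒜) (hm : POn 𝒜 m) (X : Set ℕ) :
    ∃ 𝒜' : Set (Set ℕ), ∃ m' : Set ℕ → ℝ, IsSubalgebra 𝒜' ∧ 𝒜 ⊆ 𝒜' ∧ X ∈ 𝒜' ∧
      POn 𝒜' m' ∧ (∀ A ∈ 𝒜, m' A = m A) ∧
      m' X = sInf {r | ∃ D, D ∈ 𝒜 ∧ X ⊆ D ∧ r = m D} :=
  ⟨algX 𝒜 X, mX 𝒜 m X, algX_subalgebra h𝒜, subset_algX h𝒜, X_mem_algX h𝒜,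
    mX_pOn h𝒜 hm, fun A hA => mX_extends h𝒜 hm hA, mX_val h𝒜 hm⟩

end Step2
end Stmt7aux

namespace Stmt7aux
open Set

section Zorn
variable {𝒜 : Set (Set ℕ)} {m : Set ℕ → ℝ}

def GoodG (G : Set (Set ℕ × ℝ)) : Prop :=
  (∀ p ∈ G, ∀ q ∈ G, p.1 = q.1 → p.2 = q.2) ∧
  IsSubalgebra (Prod.fst '' G) ∧
  (∀ p ∈ G, 0 ≤ p.2 ∧ p.2 ≤ 1) ∧
  ((Set.univ, (1:ℝ)) ∈ G) ∧
  (∀ p ∈ G, ∀ q ∈ G, Disjoint p.1 q.1 → (p.1 ∪ q.1, p.2 + q.2) ∈ G)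

open scoped Classical in
noncomputable def numG (G : Set (Set ℕ × ℝ)) : Set ℕ → ℝ := fun A =>
  if h : ∃ r, (A, r) ∈ G then h.choose else 0

lemma numG_mem {G : Set (Set ℕ × ℝ)} {A : Set ℕ} (h : A ∈ Prod.fst '' G) :
    (A, numG G A) ∈ G := by
  obtain ⟨⟨A', r⟩, hmem, rfl⟩ := h
  have hex : ∃ r', ((A', r') : Set ℕ × ℝ).1 = A' ∧ True := ⟨r, rfl, trivial⟩
  have hex2 : ∃ r', (A', r') ∈ G := ⟨r, hmem⟩
  rw [numG, dif_pos hex2]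
  exact hex2.choose_spec

lemma numG_eq {G : Set (Set ℕ × ℝ)} (hG : GoodG G) {A : Set ℕ} {r : ℝ}
    (h : (A, r) ∈ G) : numG G A = r := by
  have h1 : (A, numG G A) ∈ G := numG_mem ⟨(A, r), h, rfl⟩
  exact hG.1 _ h1 _ h rfl

lemma numG_pOn {G : Set (Set ℕ × ℝ)} (hG : GoodG G) : POn (Prod.fst '' G) (numG G) := by
  refine ⟨?_, ?_, ?_⟩
  · intro A hA
    exact (hG.2.2.1 _ (numG_mem hA)).1
  · exact numG_eq hG hG.2.2.2.1
  · intro A hA C hC hd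
    have := hG.2.2.2.2 _ (numG_mem hA) _ (numG_mem hC) hd
    exact numG_eq hG this

lemma totalExt (h𝒜 : IsSubalgebra 𝒜) (hm : POn 𝒜 m) :
    ∃ ν : Set ℕ → ℝ, IsMeasure ν ∧ ∀ A ∈ 𝒜, ν A = m A := by
  set S : Set (Set (Set ℕ × ℝ)) := {G | GoodG G} with hS
  set G₀ : Set (Set ℕ × ℝ) := (fun A => (A, m A)) '' 𝒜 with hG₀
  have hdom₀ : Prod.fst '' G₀ = 𝒜 := by
    ext A
    constructor
    · rintro ⟨⟨A', r⟩, ⟨C, hC, hCe⟩, rfl⟩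
      obtain ⟨rfl, _⟩ := Prod.mk.injEq .. ▸ hCe
      exact hC
    · intro hA; exact ⟨(A, m A), ⟨A, hA, rfl⟩, rfl⟩
  have hG₀S : G₀ ∈ S := by
    refine ⟨?_, ?_, ?_, ?_, ?_⟩
    · rintro p ⟨A, hA, rfl⟩ q ⟨C, hC, rfl⟩ h
      simp only at h ⊢
      rw [h]
    · rw [hdom₀]; exact h𝒜
    · rintro p ⟨A, hA, rfl⟩
      exact ⟨hm.1 A hA, hm.le_one h𝒜 hA⟩
    · have : ((Set.univ : Set ℕ), m Set.univ) ∈ G₀ := ⟨Set.univ, h𝒜.2.1, rfl⟩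
      rwa [hm.2.1] at this
    · rintro p ⟨A, hA, rfl⟩ q ⟨C, hC, rfl⟩ hd
      have : ((A ∪ C : Set ℕ), m (A ∪ C)) ∈ G₀ := ⟨A ∪ C, h𝒜.2.2.2.1 A hA C hC, rfl⟩
      rwa [hm.2.2 A hA C hC hd] at this
  have hchain : ∀ c ⊆ S, IsChain (· ⊆ ·) c → c.Nonempty → ∃ ub ∈ S, ∀ s ∈ c, s ⊆ ub := by
    intro c hcS hchain hcne
    refine ⟨⋃₀ c, ?_, fun s hs => Set.subset_sUnion_of_mem hs⟩
    have hpair : ∀ p ∈ ⋃₀ c, ∀ q ∈ ⋃₀ c, ∃ G ∈ c, p ∈ G ∧ q ∈ G := by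
      rintro p ⟨G, hGc, hpG⟩ q ⟨G', hG'c, hqG'⟩
      rcases hchain.total hGc hG'c with h | h
      · exact ⟨G', hG'c, h hpG, hqG'⟩
      · exact ⟨G, hGc, hpG, h hqG'⟩
    refine ⟨?_, ?_, ?_, ?_, ?_⟩
    · intro p hp q hq heq
      obtain ⟨G, hGc, hpG, hqG⟩ := hpair p hp q hq
      exact (hcS hGc).1 p hpG q hqG heq
    · refine ⟨?_, ?_, ?_, ?_, ?_⟩
      · obtain ⟨G, hGc⟩ := hcne
        exact ⟨(∅, numG G ∅), ⟨G, hGc, numG_mem ((hcS hGc).2.1.1)⟩, rfl⟩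
      · obtain ⟨G, hGc⟩ := hcne
        exact ⟨(Set.univ, 1), ⟨G, hGc, (hcS hGc).2.2.2.1⟩, rfl⟩
      · rintro A ⟨p, ⟨G, hGc, hpG⟩, rfl⟩
        obtain ⟨q, hq, hqe⟩ := (hcS hGc).2.1.2.2.1 p.1 ⟨p, hpG, rfl⟩
        exact ⟨q, ⟨G, hGc, hq⟩, hqe⟩
      · rintro A ⟨p, ⟨G, hGc, hpG⟩, rfl⟩ C ⟨q, ⟨G', hG'c, hqG'⟩, rfl⟩
        obtain ⟨G'', hG''c, hpG'', hqG''⟩ := hpair p ⟨G, hGc, hpG⟩ q ⟨G', hG'c, hqG'⟩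
        obtain ⟨w, hw, hwe⟩ := (hcS hG''c).2.1.2.2.2.1 p.1 ⟨p, hpG'', rfl⟩ q.1 ⟨q, hqG'', rfl⟩
        exact ⟨w, ⟨G'', hG''c, hw⟩, hwe⟩
      · rintro A ⟨p, ⟨G, hGc, hpG⟩, rfl⟩ C ⟨q, ⟨G', hG'c, hqG'⟩, rfl⟩
        obtain ⟨G'', hG''c, hpG'', hqG''⟩ := hpair p ⟨G, hGc, hpG⟩ q ⟨G', hG'c, hqG'⟩
        obtain ⟨w, hw, hwe⟩ := (hcS hG''c).2.1.2.2.2.2 p.1 ⟨p, hpG'', rfl⟩ q.1 ⟨q, hqG'', rfl⟩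
        exact ⟨w, ⟨G'', hG''c, hw⟩, hwe⟩
    · rintro p ⟨G, hGc, hpG⟩
      exact (hcS hGc).2.2.1 p hpG
    · obtain ⟨G, hGc⟩ := hcne
      exact ⟨G, hGc, (hcS hGc).2.2.2.1⟩
    · rintro p ⟨G, hGc, hpG⟩ q ⟨G', hG'c, hqG'⟩ hd
      obtain ⟨G'', hG''c, hpG'', hqG''⟩ := hpair p ⟨G, hGc, hpG⟩ q ⟨G', hG'c, hqG'⟩
      exact ⟨G'', hG''c, (hcS hG''c).2.2.2.2 p hpG'' q hqG'' hd⟩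
  obtain ⟨M, hG₀M, hMmax⟩ := zorn_subset_nonempty S hchain G₀ hG₀S
  have hMS : GoodG M := hMmax.prop
  -- the maximal graph is total
  have htotal : ∀ X : Set ℕ, X ∈ Prod.fst '' M := by
    intro X
    by_contra hX
    obtain ⟨𝒜', m', h𝒜', hsub', hX', hm', hext', _⟩ :=
      stepExt hMS.2.1 (numG_pOn hMS) X
    set M' : Set (Set ℕ × ℝ) := (fun A => (A, m' A)) '' 𝒜' with hM'
    have hdom' : Prod.fst '' M' = 𝒜' := by
      ext A
      constructor
      · rintro ⟨⟨A', r⟩, ⟨C, hC, hCe⟩, rfl⟩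
        obtain ⟨rfl, _⟩ := Prod.mk.injEq .. ▸ hCe
        exact hC
      · intro hA; exact ⟨(A, m' A), ⟨A, hA, rfl⟩, rfl⟩
    have hMM' : M ⊆ M' := by
      rintro ⟨A, r⟩ hmem
      have hA : A ∈ Prod.fst '' M := ⟨(A, r), hmem, rfl⟩
      have h1 : r = numG M A := (numG_eq hMS hmem).symm
      have h2 : m' A = numG M A := hext' A hA
      exact ⟨A, hsub' hA, by rw [h1, ← h2]⟩
    have hM'S : M' ∈ S := by
      refine ⟨?_, ?_, ?_, ?_, ?_⟩
      · rintro p ⟨A, hA, rfl⟩ q ⟨C, hC, rfl⟩ h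
        simp only at h ⊢
        rw [h]
      · rw [hdom']; exact h𝒜'
      · rintro p ⟨A, hA, rfl⟩
        exact ⟨hm'.1 A hA, hm'.le_one h𝒜' hA⟩
      · have : ((Set.univ : Set ℕ), m' Set.univ) ∈ M' := ⟨Set.univ, h𝒜'.2.1, rfl⟩
        rwa [hm'.2.1] at this
      · rintro p ⟨A, hA, rfl⟩ q ⟨C, hC, rfl⟩ hd
        have : ((A ∪ C : Set ℕ), m' (A ∪ C)) ∈ M' := ⟨A ∪ C, h𝒜'.2.2.2.1 A hA C hC, rfl⟩
        rwa [hm'.2.2 A hA C hC hd] at this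
    have : M' ⊆ M := hMmax.2 hM'S hMM'
    apply hX
    have hXM' : X ∈ Prod.fst '' M' := hdom' ▸ hX'
    obtain ⟨p, hp, rfl⟩ := hXM'
    exact ⟨p, this hp, rfl⟩
  refine ⟨numG M, ⟨?_, ?_, ?_⟩, ?_⟩
  · intro A
    exact hMS.2.2.1 _ (numG_mem (htotal A))
  · exact numG_eq hMS hMS.2.2.2.1
  · intro A C hd
    exact numG_eq hMS (hMS.2.2.2.2 _ (numG_mem (htotal A)) _ (numG_mem (htotal C)) hd)
  · intro A hA
    have : (A, m A) ∈ M := hG₀M ⟨A, hA, rfl⟩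
    exact numG_eq hMS this

end Zorn
end Stmt7aux

namespace Stmt7aux
open Set Filter

section MeasureHelpers
variable {ν : Set ℕ → ℝ}

lemma meas_mono (hν : IsMeasure ν) {X Y : Set ℕ} (h : X ⊆ Y) : ν X ≤ ν Y :=
  (isMeasure_pOn hν).mono isSubalgebra_univ trivial trivial h

lemma meas_empty (hν : IsMeasure ν) : ν ∅ = 0 :=
  (isMeasure_pOn hν).empty isSubalgebra_univ

lemma meas_compl (hν : IsMeasure ν) (X : Set ℕ) : ν Xᶜ = 1 - ν X :=
  (isMeasure_pOn hν).compl isSubalgebra_univ trivial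

lemma meas_subadd (hν : IsMeasure ν) (X Y : Set ℕ) : ν (X ∪ Y) ≤ ν X + ν Y :=
  (isMeasure_pOn hν).subadd isSubalgebra_univ trivial trivial

lemma meas_sum_range (hν : IsMeasure ν) {A : ℕ → Set ℕ}
    (hdisj : Pairwise (Function.onFun Disjoint A)) (N : ℕ) :
    ν (⋃ n ∈ Finset.range N, A n) = ∑ n ∈ Finset.range N, ν (A n) :=
  ((isMeasure_pOn hν).biUnion isSubalgebra_univ (fun _ => trivial) hdisj N).2

lemma meas_summable (hν : IsMeasure ν) {A : ℕ → Set ℕ}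
    (hdisj : Pairwise (Function.onFun Disjoint A)) : Summable (fun n => ν (A n)) := by
  refine summable_of_sum_range_le (c := 1) (fun n => (hν.1 (A n)).1) (fun N => ?_)
  rw [← meas_sum_range hν hdisj N]
  exact (hν.1 _).2

lemma meas_tsum_le_one (hν : IsMeasure ν) {A : ℕ → Set ℕ}
    (hdisj : Pairwise (Function.onFun Disjoint A)) : ∑' n, ν (A n) ≤ 1 := by
  refine Summable.tsum_le_of_sum_range_le (meas_summable hν hdisj) (fun N => ?_)
  rw [← meas_sum_range hν hdisj N]
  exact (hν.1 _).2

lemma meas_inter_lower (hν : IsMeasure ν) (X Y : Set ℕ) :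
    ν X + ν Y - 1 ≤ ν (X ∩ Y) := by
  have h1 : ν (X ∩ Y) + ν (Y \ X) = ν Y := by
    have heq : (X ∩ Y) ∪ (Y \ X) = Y := by
      ext x; simp only [Set.mem_union, Set.mem_inter_iff, Set.mem_diff]; tauto
    have := hν.2.2 (X ∩ Y) (Y \ X) (by
      rw [Set.disjoint_left]; rintro x ⟨hx1, hx2⟩ ⟨_, hx4⟩; exact hx4 hx1)
    rw [heq] at this
    linarith [this]
  have h2 : ν (X ∪ (Y \ X)) = ν X + ν (Y \ X) := hν.2.2 X (Y \ X) disjoint_sdiff_right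
  have h3 : ν (X ∪ (Y \ X)) ≤ 1 := (hν.1 _).2
  linarith

end MeasureHelpers

section DomSelector

/-- The key use of `𝔡 = 𝔠`: a pseudo-selector hitting every set of large measure. -/
lemma selector (hdom : domNumber = Cardinal.continuum.{0}) {𝒜 : Set (Set ℕ)}
    {ρ : Set ℕ → ℝ} (hρ : IsMeasure ρ) (hcard : Cardinal.mk ↥𝒜 < Cardinal.continuum.{0})
    (A : ℕ → Set ℕ) (hdisj : Pairwise (Function.onFun Disjoint A)) :
    ∃ S : Set ℕ, (∀ n, (S ∩ A n).Finite) ∧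
      ∀ D ∈ 𝒜, (∑' n, ρ (A n)) < ρ D → (S ∩ D).Nonempty := by
  classical
  set s := ∑' n, ρ (A n) with hs
  set U : ℕ → Set ℕ := fun N => ⋃ n ∈ Finset.range N, A n with hU
  have hUval : ∀ N, ρ (U N) = ∑ n ∈ Finset.range N, ρ (A n) := fun N => meas_sum_range hρ hdisj N
  have hUle : ∀ N, ρ (U N) ≤ s := by
    intro N
    rw [hUval N]
    exact Summable.sum_le_tsum _ (fun n _ => (hρ.1 _).1) (meas_summable hρ hdisj)
  set Dset : Set (Set ℕ) := {D | D ∈ 𝒜 ∧ s < ρ D} with hDset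
  have hne : ∀ (D : ↥Dset) (N : ℕ), (D.1 \ U N).Nonempty := by
    rintro ⟨D, hD𝒜, hDs⟩ N
    rw [Set.nonempty_iff_ne_empty]
    intro hempty
    have h1 : ρ D ≤ ρ (D ∩ U N) + ρ (D \ U N) := by
      have := meas_subadd hρ (D ∩ U N) (D \ U N)
      rwa [Set.inter_union_diff] at this
    have h2 : ρ (D ∩ U N) ≤ ρ (U N) := meas_mono hρ Set.inter_subset_right
    rw [hempty, meas_empty hρ] at h1
    have := hUle N
    linarith
  set hfun : ↥Dset → ℕ → ℕ := fun D N => (hne D N).choose with hhfun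
  have hfun_spec : ∀ (D : ↥Dset) (N : ℕ), hfun D N ∈ D.1 \ U N := fun D N => (hne D N).choose_spec
  set Hfam : Set (ℕ → ℕ) := Set.range hfun with hHfam
  have hHcard : Cardinal.mk ↥Hfam < domNumber := by
    rw [hdom]
    exact lt_of_le_of_lt (Cardinal.mk_range_le.trans (Cardinal.mk_le_mk_of_subset
      (fun D hD => hD.1))) hcard
  have hnotdom : ¬ (∀ g : ℕ → ℕ, ∃ f ∈ Hfam, ∀ᶠ n in atTop, g n ≤ f n) := by
    intro hdomfam
    have : domNumber ≤ Cardinal.mk ↥Hfam :=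
      csInf_le (OrderBot.bddBelow _) ⟨Hfam, rfl, hdomfam⟩
    exact absurd hHcard (not_lt.2 this)
  push_neg at hnotdom
  obtain ⟨g, hg⟩ := hnotdom
  set G : ℕ → ℕ := fun n => (Finset.range (n+1)).sup g with hG
  have hGmono : Monotone G := by
    intro a b hab
    exact Finset.sup_mono (Finset.range_subset_range.2 (by omega))
  have hgG : ∀ n, g n ≤ G n := fun n => Finset.le_sup (Finset.mem_range.2 (by omega))
  set S : Set ℕ := {k | ∃ N, k < G N ∧ ∀ n < N, k ∉ A n} with hSdef
  refine ⟨S, ?_, ?_⟩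
  · intro n
    refine (Set.finite_Iio (G n)).subset ?_
    rintro k ⟨hkS, hkA⟩
    obtain ⟨N, hkG, hknot⟩ := hkS
    rcases le_or_gt N n with h | h
    · exact Set.mem_Iio.2 (lt_of_lt_of_le hkG (hGmono h))
    · exact absurd hkA (hknot n h)
  · intro D hD𝒜 hDs
    have hDmem : D ∈ Dset := ⟨hD𝒜, hDs⟩
    set f := hfun ⟨D, hDmem⟩ with hf
    have hfH : f ∈ Hfam := ⟨⟨D, hDmem⟩, rfl⟩
    have hfreq : ∃ᶠ n in atTop, f n < g n := by
      have := hg f hfH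
      exact this.mono (fun n hn => by omega)
    obtain ⟨N, hN⟩ := hfreq.exists
    have hspec := hfun_spec ⟨D, hDmem⟩ N
    refine ⟨f N, ?_, hspec.1⟩
    refine ⟨N, lt_of_lt_of_le hN (hgG N), ?_⟩
    intro n hn hmem
    exact hspec.2 (Set.mem_biUnion (Finset.mem_range.2 hn) hmem)

/-- The outer measure of such a selector is exactly `1 - ∑ ρ (A n)`. -/
lemma outer_val {𝒜 : Set (Set ℕ)} {ρ : Set ℕ → ℝ} {A : ℕ → Set ℕ} {S : Set ℕ}
    (h𝒜 : IsSubalgebra 𝒜) (hρ : IsMeasure ρ)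
    (hfin0 : ∀ F : Set ℕ, F.Finite → F ∈ 𝒜 ∧ ρ F = 0)
    (hA : ∀ n, A n ∈ 𝒜) (hdisj : Pairwise (Function.onFun Disjoint A))
    (hSfin : ∀ n, (S ∩ A n).Finite)
    (hhit : ∀ D ∈ 𝒜, (∑' n, ρ (A n)) < ρ D → (S ∩ D).Nonempty) :
    sInf {r | ∃ D, D ∈ 𝒜 ∧ S ⊆ D ∧ r = ρ D} = 1 - ∑' n, ρ (A n) := by
  classical
  set s := ∑' n, ρ (A n) with hs
  set U : ℕ → Set ℕ := fun N => ⋃ n ∈ Finset.range N, A n with hU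
  have hUmem : ∀ N, U N ∈ 𝒜 := by
    intro N
    induction N with
    | zero => simpa [hU] using h𝒜.1
    | succ N ih =>
      have : U (N+1) = U N ∪ A N := by
        simp only [hU]
        ext x
        simp only [Set.mem_iUnion, Finset.mem_range, Set.mem_union]
        constructor
        · rintro ⟨n, hn, hx⟩
          rcases Nat.lt_succ_iff_lt_or_eq.1 hn with h | rfl
          · exact Or.inl ⟨n, h, hx⟩
          · exact Or.inr hx
        · rintro (⟨n, hn, hx⟩ | hx)
          · exact ⟨n, by omega, hx⟩
          · exact ⟨N, by omega, hx⟩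
      rw [this]
      exact h𝒜.2.2.2.1 _ ih _ (hA N)
  have hUval : ∀ N, ρ (U N) = ∑ n ∈ Finset.range N, ρ (A n) := fun N => meas_sum_range hρ hdisj N
  have hbdd : BddBelow {r | ∃ D, D ∈ 𝒜 ∧ S ⊆ D ∧ r = ρ D} := by
    refine ⟨0, ?_⟩
    rintro r ⟨D, _, _, rfl⟩
    exact (hρ.1 D).1
  apply le_antisymm
  · -- sInf ≤ 1 - s
    refine le_of_forall_pos_le_add ?_
    intro ε hε
    have htend : Tendsto (fun N => ∑ n ∈ Finset.range N, ρ (A n)) atTop (nhds s) :=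
      (meas_summable hρ hdisj).hasSum.tendsto_sum_nat
    have : ∀ᶠ N in atTop, s - ε < ∑ n ∈ Finset.range N, ρ (A n) := by
      have := htend.eventually (eventually_gt_nhds (by linarith : s - ε < s))
      exact this
    obtain ⟨N, hN⟩ := this.exists
    set FN := S ∩ U N with hFN
    have hFNfin : FN.Finite := by
      have : FN = ⋃ n ∈ Finset.range N, (S ∩ A n) := by
        simp only [hFN, hU]
        ext x
        simp only [Set.mem_inter_iff, Set.mem_iUnion, Finset.mem_range]
        tauto
      rw [this]
      exact Set.Finite.biUnion (Finset.finite_toSet _) (fun n _ => hSfin n)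
    set CN := (U N)ᶜ ∪ FN with hCN
    have hCNmem : CN ∈ 𝒜 := h𝒜.2.2.2.1 _ (h𝒜.2.2.1 _ (hUmem N)) _ (hfin0 FN hFNfin).1
    have hSCN : S ⊆ CN := by
      intro k hk
      by_cases hkU : k ∈ U N
      · exact Or.inr ⟨hk, hkU⟩
      · exact Or.inl hkU
    have hCNval : ρ CN ≤ 1 - ∑ n ∈ Finset.range N, ρ (A n) := by
      have h1 := meas_subadd hρ (U N)ᶜ FN
      have h2 := meas_compl hρ (U N)
      have h3 := (hfin0 FN hFNfin).2
      rw [← hUval N]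
      linarith [hCN ▸ h1]
    have := csInf_le hbdd ⟨CN, hCNmem, hSCN, rfl⟩
    linarith
  · -- 1 - s ≤ sInf
    refine le_csInf ⟨ρ Set.univ, Set.univ, h𝒜.2.1, Set.subset_univ _, rfl⟩ ?_
    rintro r ⟨D, hD, hSD, rfl⟩
    by_contra hlt
    push_neg at hlt
    have hcompl : s < ρ Dᶜ := by
      rw [meas_compl hρ D]
      linarith
    obtain ⟨k, hkS, hkD⟩ := hhit Dᶜ (h𝒜.2.2.1 D hD) hcompl
    exact hkD (hSD hkS)

end DomSelector
end Stmt7aux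

namespace Stmt7aux
open Set Filter

section Dir2

/-- The right-hand side of the main theorem. -/
def ExtProp (_ : Unit) : Prop :=
  ∀ (B : Set (Set ℕ)) (μ : Set ℕ → ℝ), IsSubalgebra B →
    Cardinal.mk ↥B < Cardinal.continuum.{0} → IsPartialMeasure B μ →
    ∃ ν : Set ℕ → ℝ, IsMeasure ν ∧ IsFree ν ∧ IsPMeasure ν ∧ ∀ A ∈ B, ν A = μ A

noncomputable def pE : ℕ ≃ ℕ × ℕ := (Denumerable.eqv (ℕ × ℕ)).symm

noncomputable def Uf (f : ℕ → ℕ) : Set ℕ := {k | f (pE k).1 ≤ (pE k).2}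
noncomputable def Vn (N : ℕ) : Set ℕ := {k | N ≤ (pE k).1}
noncomputable def Acol (n : ℕ) : Set ℕ := {k | (pE k).1 = n}

lemma colpoint_mem (N c : ℕ) : (pE.symm (N, c)) ∈ Vn N ∧ (pE.symm (N, c)) ∈ Acol N ∧
    ∀ g : ℕ → ℕ, g N ≤ c → (pE.symm (N, c)) ∈ Uf g := by
  have h : pE (pE.symm (N, c)) = (N, c) := pE.apply_symm_apply _
  refine ⟨?_, ?_, ?_⟩
  · simp only [Vn, Set.mem_setOf_eq, h, le_refl]
  · simp only [Acol, Set.mem_setOf_eq, h]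
  · intro g hg; simp only [Uf, Set.mem_setOf_eq, h]; exact hg

lemma generate_nebot (D : Set (ℕ → ℕ)) :
    NeBot (Filter.generate (((fun f => Uf f) '' D) ∪ Set.range Vn ∪
      Set.range (fun k : ℕ => ({k}ᶜ : Set ℕ)))) := by
  rw [Filter.generate_neBot_iff]
  intro t hsub hfin
  -- find a uniform bound for the finite subfamily
  classical
  have key : ∀ u : Finset (Set ℕ),
      ↑u ⊆ (((fun f => Uf f) '' D) ∪ Set.range Vn ∪
        Set.range (fun k : ℕ => ({k}ᶜ : Set ℕ))) →
      ∃ (g : ℕ → ℕ) (N : ℕ) (K : Finset ℕ), ((Uf g ∩ Vn N) \ ↑K) ⊆ ⋂₀ (↑u : Set (Set ℕ)) := by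
    intro u
    induction u using Finset.induction_on with
    | empty => exact fun _ => ⟨id, 0, ∅, by simp⟩
    | @insert x t hxt ih =>
      intro hsubins
      rw [Finset.coe_insert] at hsubins ⊢
      obtain ⟨g, N, K, hK⟩ := ih (fun y hy => hsubins (Set.mem_insert_of_mem x hy))
      have hx := hsubins (Set.mem_insert x ↑t)
      rcases hx with (⟨f, _, rfl⟩ | ⟨N', rfl⟩) | ⟨k, rfl⟩
      · refine ⟨fun n => max (g n) (f n), N, K, ?_⟩
        rintro y ⟨⟨hU, hV⟩, hKy⟩
        have hU' : max (g (pE y).1) (f (pE y).1) ≤ (pE y).2 := hU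
        rw [Set.sInter_insert]
        refine ⟨?_, hK ⟨⟨?_, hV⟩, hKy⟩⟩
        · show f (pE y).1 ≤ (pE y).2
          exact le_trans (le_max_right _ _) hU'
        · show g (pE y).1 ≤ (pE y).2
          exact le_trans (le_max_left _ _) hU'
      · refine ⟨g, max N N', K, ?_⟩
        rintro y ⟨⟨hU, hV⟩, hKy⟩
        have hV' : max N N' ≤ (pE y).1 := hV
        rw [Set.sInter_insert]
        refine ⟨?_, hK ⟨⟨hU, ?_⟩, hKy⟩⟩
        · show N' ≤ (pE y).1
          exact le_trans (le_max_right _ _) hV'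
        · show N ≤ (pE y).1
          exact le_trans (le_max_left _ _) hV'
      · refine ⟨g, N, insert k K, ?_⟩
        rintro y ⟨hUV, hKy⟩
        rw [Set.sInter_insert]
        refine ⟨?_, hK ⟨hUV, fun hy => hKy (by simp; exact Or.inr hy)⟩⟩
        intro hy
        have : y = k := hy
        exact hKy (by simp [this])
  obtain ⟨g, N, K, hK⟩ := key hfin.toFinset (by rwa [Set.Finite.coe_toFinset])
  rw [Set.Finite.coe_toFinset] at hK
  -- the column N has infinitely many points above g N avoiding K
  have hinj : Function.Injective (fun m : ℕ => pE.symm (N, g N + m)) := by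
    intro a b hab
    have := congrArg pE hab
    simp only [pE.apply_symm_apply, Prod.mk.injEq] at this
    omega
  have hinf : (Set.range (fun m : ℕ => pE.symm (N, g N + m))).Infinite :=
    Set.infinite_range_of_injective hinj
  obtain ⟨y, hyr, hyK⟩ := (hinf.diff (K.finite_toSet)).nonempty
  obtain ⟨m, rfl⟩ := hyr
  refine ⟨pE.symm (N, g N + m), hK ⟨⟨?_, ?_⟩, hyK⟩⟩
  · exact (colpoint_mem N (g N + m)).2.2 g (by omega)
  · exact (colpoint_mem N (g N + m)).1

lemma dir2_nondom (hyp : ExtProp ()) (D : Set (ℕ → ℕ))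
    (hcard : Cardinal.mk ↥D < Cardinal.continuum.{0}) :
    ∃ g : ℕ → ℕ, ∀ f ∈ D, ¬ (∀ᶠ n in atTop, g n ≤ f n) := by
  classical
  set gens : Set (Set ℕ) := ((fun f => Uf f) '' D) ∪ Set.range Vn with hgens
  set gens' : Set (Set ℕ) := gens ∪ Set.range (fun k : ℕ => ({k}ᶜ : Set ℕ)) with hgens'
  have hnb : NeBot (Filter.generate gens') := generate_nebot D
  set 𝒰 : Ultrafilter ℕ := @Ultrafilter.of ℕ (Filter.generate gens') hnb with h𝒰
  have hUof : (𝒰 : Filter ℕ) ≤ Filter.generate gens' := Ultrafilter.of_le _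
  have hmem : ∀ X ∈ gens', X ∈ 𝒰 := fun X hX => hUof (Filter.mem_generate_of_mem hX)
  have hcofin : ∀ T : Set ℕ, T.Finite → Tᶜ ∈ 𝒰 := by
    intro T hT
    have heq : Tᶜ = ⋂ k ∈ hT.toFinset, ({k}ᶜ : Set ℕ) := by
      ext x
      simp only [Set.mem_compl_iff, Set.mem_iInter, Set.Finite.mem_toFinset,
        Set.mem_singleton_iff]
      constructor
      · intro h i hi hx
        exact h (hx ▸ hi)
      · intro h hxT
        exact h x hxT rfl
    rw [heq]
    exact (Filter.biInter_finset_mem hT.toFinset).2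
      (fun k _ => hmem _ (Or.inr ⟨k, rfl⟩))
  have hnotfin : ∀ T : Set ℕ, T.Finite → T ∉ 𝒰 := by
    intro T hT hTm
    have := Filter.inter_mem hTm (hcofin T hT)
    simp at this
  set μ : Set ℕ → ℝ := fun X => if X ∈ 𝒰 then 1 else 0 with hμ
  set B : Set (Set ℕ) := clo gens with hB
  have hBsub : IsSubalgebra B := isSubalgebra_clo gens
  have hBcard : Cardinal.mk ↥B < Cardinal.continuum.{0} := by
    refine mk_clo_lt ?_ Cardinal.aleph0_lt_continuum
    refine lt_of_le_of_lt (Cardinal.mk_union_le _ _) ?_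
    have h1 : Cardinal.mk ↥((fun f => Uf f) '' D) < Cardinal.continuum.{0} :=
      lt_of_le_of_lt Cardinal.mk_image_le hcard
    have h2 : Cardinal.mk ↥(Set.range Vn) < Cardinal.continuum.{0} :=
      lt_of_le_of_lt Cardinal.mk_range_le
        (by rw [Cardinal.mk_nat]; exact Cardinal.aleph0_lt_continuum)
    exact Cardinal.add_lt_of_lt Cardinal.aleph0_lt_continuum.le h1 h2
  have hμB : IsPartialMeasure B μ := by
    refine ⟨?_, ?_, ?_, ?_⟩
    · intro A _
      by_cases h : A ∈ 𝒰 <;> simp [hμ, h]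
    · have : (Set.univ : Set ℕ) ∈ 𝒰 := Filter.univ_mem
      simp [hμ, this]
    · intro A _ C _ hd
      have hnotboth : ¬ (A ∈ 𝒰 ∧ C ∈ 𝒰) := by
        rintro ⟨h1, h2⟩
        have := Filter.inter_mem h1 h2
        rw [Set.disjoint_iff_inter_eq_empty.1 hd] at this
        exact Filter.empty_notMem (𝒰 : Filter ℕ) this
      by_cases h1 : A ∈ 𝒰 <;> by_cases h2 : C ∈ 𝒰
      · exact absurd ⟨h1, h2⟩ hnotboth
      · simp [hμ, Ultrafilter.union_mem_iff, h1, h2]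
      · simp [hμ, Ultrafilter.union_mem_iff, h1, h2]
      · simp [hμ, Ultrafilter.union_mem_iff, h1, h2]
    · intro A _ hA
      simp [hμ, hnotfin A hA]
  obtain ⟨ν, hν, hνfree, hνP, hνext⟩ := hyp B μ hBsub hBcard hμB
  -- the column partition
  have hcolpart : IsPartition Acol := by
    constructor
    · intro a b hab
      rw [Function.onFun, Set.disjoint_left]
      intro k hka hkb
      exact hab (hka.symm.trans hkb)
    · ext k
      simp only [Set.mem_iUnion, Set.mem_univ, iff_true]
      exact ⟨(pE k).1, rfl⟩
  have hVmem : ∀ N, Vn N ∈ B := fun N => subset_clo _ (Or.inr ⟨N, rfl⟩)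
  have hVval : ∀ N, ν (Vn N) = 1 := by
    intro N
    rw [hνext _ (hVmem N)]
    have : Vn N ∈ 𝒰 := hmem _ (Or.inl (Or.inr ⟨N, rfl⟩))
    simp [hμ, this]
  have hcol0 : ∀ n, ν (Acol n) = 0 := by
    intro n
    have hsub : Acol n ⊆ (Vn (n+1))ᶜ := by
      intro k hk hVk
      simp only [Acol, Set.mem_setOf_eq] at hk
      simp only [Vn, Set.mem_setOf_eq, hk] at hVk
      omega
    have h1 : ν (Acol n) ≤ ν (Vn (n+1))ᶜ := meas_mono hν hsub
    rw [meas_compl hν, hVval (n+1)] at h1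
    have h2 := (hν.1 (Acol n)).1
    linarith
  obtain ⟨S, hSfin, hSval⟩ := hνP Acol hcolpart
  have hS1 : ν S = 1 := by
    rw [hSval]
    have : ∑' n, ν (Acol n) = 0 := by
      rw [tsum_congr hcol0]
      exact tsum_zero
    rw [this]; ring
  set g : ℕ → ℕ := fun n => (hSfin n).toFinset.sup (fun k => (pE k).2) + 1 with hg
  refine ⟨g, ?_⟩
  intro f hf hev
  obtain ⟨N₀, hN₀⟩ := Filter.eventually_atTop.1 hev
  have hempty : S ∩ (Uf f ∩ Vn N₀) = ∅ := by
    rw [Set.eq_empty_iff_forall_notMem]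
    rintro k ⟨hkS, hkU, hkV⟩
    set n := (pE k).1 with hn
    have hcol : k ∈ S ∩ Acol n := ⟨hkS, rfl⟩
    have hle : (pE k).2 ≤ (hSfin n).toFinset.sup (fun k => (pE k).2) :=
      Finset.le_sup (f := fun k => (pE k).2) ((hSfin n).mem_toFinset.2 hcol)
    have h1 : g n ≤ f n := hN₀ n hkV
    have h2 : f n ≤ (pE k).2 := hkU
    simp only [hg] at h1
    omega
  have hUfB : Uf f ∈ B := subset_clo _ (Or.inl ⟨f, hf, rfl⟩)
  have hUfval : ν (Uf f) = 1 := by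
    rw [hνext _ hUfB]
    have : Uf f ∈ 𝒰 := hmem _ (Or.inl (Or.inl ⟨f, hf, rfl⟩))
    simp [hμ, this]
  have h1 : ν (Uf f) + ν (Vn N₀) - 1 ≤ ν (Uf f ∩ Vn N₀) := meas_inter_lower hν _ _
  have h2 : ν S + ν (Uf f ∩ Vn N₀) - 1 ≤ ν (S ∩ (Uf f ∩ Vn N₀)) := meas_inter_lower hν _ _
  rw [hempty, meas_empty hν] at h2
  rw [hUfval, hVval N₀] at h1
  rw [hS1] at h2
  linarith

lemma dir2 (hyp : ExtProp ()) : domNumber = Cardinal.continuum.{0} := by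
  have hle : domNumber ≤ Cardinal.continuum.{0} := by
    refine csInf_le (OrderBot.bddBelow _) ?_
    refine ⟨Set.univ, ?_, ?_⟩
    · rw [Cardinal.mk_univ]
      have h1 : Cardinal.mk (ℕ → ℕ) = Cardinal.mk ℕ ^ Cardinal.mk ℕ :=
        (Cardinal.power_def ℕ ℕ).symm
      rw [h1, Cardinal.mk_nat, Cardinal.power_self_eq le_rfl, Cardinal.two_power_aleph0]
    · intro gg
      exact ⟨gg, trivial, Filter.Eventually.of_forall (fun n => le_rfl)⟩
  refine le_antisymm hle ?_
  by_contra hlt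
  push_neg at hlt
  have hne : { c : Cardinal.{0} | ∃ D : Set (ℕ → ℕ), Cardinal.mk ↥D = c ∧
      ∀ g : ℕ → ℕ, ∃ f ∈ D, ∀ᶠ n in atTop, g n ≤ f n }.Nonempty := by
    refine ⟨Cardinal.mk ↥(Set.univ : Set (ℕ → ℕ)), Set.univ, rfl, ?_⟩
    intro gg
    exact ⟨gg, trivial, Filter.Eventually.of_forall (fun n => le_rfl)⟩
  have hmem := csInf_mem hne
  obtain ⟨D, hDeq, hDdom⟩ := hmem
  have hcard : Cardinal.mk ↥D < Cardinal.continuum.{0} := by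
    rw [hDeq]; exact hlt
  obtain ⟨g, hg⟩ := dir2_nondom hyp D hcard
  obtain ⟨f, hfD, hfdom⟩ := hDdom g
  exact hg f hfD hfdom

end Dir2
end Stmt7aux

namespace Stmt7aux
open Set Cardinal Filter

section Dir1

abbrev Pt : Type := Set ℕ × (Set ℕ → ℝ)

noncomputable instance : Inhabited Pt := ⟨(∅, fun _ => 0)⟩

/-- a well-order of the partitions (indeed all `ℕ → Set ℕ`) of minimal order type -/
noncomputable def rI : (ℕ → Set ℕ) → (ℕ → Set ℕ) → Prop := (Cardinal.ord_eq (ℕ → Set ℕ)).choose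

lemma wfI : IsWellOrder (ℕ → Set ℕ) rI := (Cardinal.ord_eq (ℕ → Set ℕ)).choose_spec.choose

lemma typeI : (Cardinal.mk (ℕ → Set ℕ)).ord = @Ordinal.type _ rI wfI :=
  (Cardinal.ord_eq (ℕ → Set ℕ)).choose_spec.choose_spec

lemma mkI : Cardinal.mk (ℕ → Set ℕ) = Cardinal.continuum.{0} := by
  have h1 : Cardinal.mk (ℕ → Set ℕ) = Cardinal.mk (Set ℕ) ^ Cardinal.mk ℕ :=
    (Cardinal.power_def (Set ℕ) ℕ).symm
  rw [h1, Cardinal.mk_set, Cardinal.mk_nat, ← Cardinal.power_mul,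
    Cardinal.aleph0_mul_aleph0, Cardinal.two_power_aleph0]

lemma card_below (i : ℕ → Set ℕ) :
    Cardinal.mk {j : ℕ → Set ℕ // rI j i} < Cardinal.continuum.{0} := by
  haveI := wfI
  have h1 := Ordinal.card_typein (r := rI) i
  have h2 := Ordinal.typein_lt_type rI i
  rw [← typeI] at h2
  rw [← mkI]
  rw [← h1]
  exact Cardinal.lt_ord.1 h2

lemma rI_trans {a b c : ℕ → Set ℕ} (hab : rI a b) (hbc : rI b c) : rI a c := by
  haveI := wfI
  exact IsTrans.trans a b c hab hbc

lemma rI_tri (a b : ℕ → Set ℕ) : rI a b ∨ a = b ∨ rI b a := by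
  haveI := wfI
  exact trichotomous_of rI a b

lemma rI_wf : WellFounded rI := by
  haveI := wfI
  exact IsWellFounded.wf

variable (B : Set (Set ℕ)) (μ : Set ℕ → ℝ)

/-- the base total measure extending `μ` (and vanishing on finite sets) -/
noncomputable def nu0 (hB : IsSubalgebra B) (hμ : IsPartialMeasure B μ) : Set ℕ → ℝ :=
  (totalExt (Brep_subalgebra hB) (muB_pOn hB hμ)).choose

lemma nu0_meas (hB : IsSubalgebra B) (hμ : IsPartialMeasure B μ) : IsMeasure (nu0 B μ hB hμ) :=
  (totalExt (Brep_subalgebra hB) (muB_pOn hB hμ)).choose_spec.1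

lemma nu0_ext (hB : IsSubalgebra B) (hμ : IsPartialMeasure B μ) :
    ∀ A ∈ Brep B, nu0 B μ hB hμ A = muB B μ A :=
  (totalExt (Brep_subalgebra hB) (muB_pOn hB hμ)).choose_spec.2

lemma nu0_onB (hB : IsSubalgebra B) (hμ : IsPartialMeasure B μ) :
    ∀ A ∈ B, nu0 B μ hB hμ A = μ A := fun A hA => by
  rw [nu0_ext B μ hB hμ A (mem_Brep_of_mem hA), muB_extends hB hμ hA]

lemma nu0_finite (hB : IsSubalgebra B) (hμ : IsPartialMeasure B μ) :
    ∀ A : Set ℕ, A.Finite → nu0 B μ hB hμ A = 0 := fun A hA => by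
  rw [nu0_ext B μ hB hμ A (mem_Brep_of_finite hB hA), muB_finite hB hμ hA]

open scoped Classical in
/-- generators contributed by stage `j` -/
noncomputable def sg (g : (ℕ → Set ℕ) → Pt) (j : ℕ → Set ℕ) : Set (Set ℕ) :=
  if IsPartition j then Set.range j ∪ {(g j).1} else ∅

/-- generators available strictly below stage `i` -/
noncomputable def Gens (g : (ℕ → Set ℕ) → Pt) (i : ℕ → Set ℕ) : Set (Set ℕ) :=
  B ∪ {A : Set ℕ | A.Finite} ∪ ⋃ j ∈ {j | rI j i}, sg g j

/-- the subalgebra pinned after stage `i` acts -/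
noncomputable def Mstage (g : (ℕ → Set ℕ) → Pt) (i : ℕ → Set ℕ) : Set (Set ℕ) :=
  clo (Gens B g i ∪ sg g i)

/-- everything pinned strictly before stage `i` -/
noncomputable def Nalg (g : (ℕ → Set ℕ) → Pt) (i : ℕ → Set ℕ) : Set (Set ℕ) :=
  Brep B ∪ ⋃ j ∈ {j | rI j i}, Mstage B g j

variable {hB : IsSubalgebra B} {hμ : IsPartialMeasure B μ}

/-- the full induction invariant at stage `i` -/
def GoodAt (hB : IsSubalgebra B) (hμ : IsPartialMeasure B μ)
    (g : (ℕ → Set ℕ) → Pt) (i : ℕ → Set ℕ) (p : Pt) : Prop :=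
  IsMeasure p.2 ∧
  (∀ A : Set ℕ, A.Finite → p.2 A = 0) ∧
  (∀ A ∈ B, p.2 A = μ A) ∧
  (∀ X ∈ Brep B, p.2 X = nu0 B μ hB hμ X) ∧
  (∀ j, rI j i → ∀ X ∈ Mstage B g j, p.2 X = (g j).2 X) ∧
  (IsPartition i → (∀ n : ℕ, (p.1 ∩ i n).Finite) ∧ p.2 p.1 = 1 - ∑' n : ℕ, p.2 (i n))

open scoped Classical in
/-- the transfinite recursion -/
noncomputable def FF (hB : IsSubalgebra B) (hμ : IsPartialMeasure B μ) : (ℕ → Set ℕ) → Pt :=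
  rI_wf.fix (fun i prev =>
    let g : (ℕ → Set ℕ) → Pt := fun j => if h : rI j i then prev j h else default
    if h : ∃ p, GoodAt B μ hB hμ g i p then h.choose else default)

lemma sg_congr {g g' : (ℕ → Set ℕ) → Pt} {j : ℕ → Set ℕ} (h : g j = g' j) :
    sg g j = sg g' j := by
  unfold sg; rw [h]

lemma Mstage_congr {g g' : (ℕ → Set ℕ) → Pt} {j : ℕ → Set ℕ}
    (h : ∀ k, rI k j ∨ k = j → g k = g' k) : Mstage B g j = Mstage B g' j := by
  unfold Mstage Gens
  have h1 : sg g j = sg g' j := sg_congr (h j (Or.inr rfl))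
  have h2 : (⋃ k ∈ {k | rI k j}, sg g k) = ⋃ k ∈ {k | rI k j}, sg g' k := by
    apply Set.iUnion₂_congr
    intro k hk
    exact sg_congr (h k (Or.inl hk))
  rw [h1, h2]

lemma GoodAt_congr {g g' : (ℕ → Set ℕ) → Pt} {i : ℕ → Set ℕ}
    (h : ∀ j, rI j i → g j = g' j) (p : Pt) :
    GoodAt B μ hB hμ g i p ↔ GoodAt B μ hB hμ g' i p := by
  unfold GoodAt
  have hM : ∀ j, rI j i → Mstage B g j = Mstage B g' j := by
    intro j hj
    apply Mstage_congr
    rintro k (hk | hkj)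
    · exact h k (rI_trans hk hj)
    · rw [hkj]; exact h j hj
  constructor
  · rintro ⟨h1, h2, h3, h4, h5, h6⟩
    refine ⟨h1, h2, h3, h4, ?_, h6⟩
    intro j hj X hX
    rw [← hM j hj] at hX
    rw [h5 j hj X hX, h j hj]
  · rintro ⟨h1, h2, h3, h4, h5, h6⟩
    refine ⟨h1, h2, h3, h4, ?_, h6⟩
    intro j hj X hX
    rw [hM j hj] at hX
    rw [h5 j hj X hX, h j hj]

open scoped Classical in
lemma FF_eq (i : ℕ → Set ℕ) :
    FF B μ hB hμ i = (let g : (ℕ → Set ℕ) → Pt :=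
        fun j => if h : rI j i then FF B μ hB hμ j else default
      if h : ∃ p, GoodAt B μ hB hμ g i p then h.choose else default) := by
  unfold FF
  rw [WellFounded.fix_eq]

end Dir1
end Stmt7aux

namespace Stmt7aux
open Set Cardinal Filter

section Dir1b
variable (B : Set (Set ℕ)) (μ : Set ℕ → ℝ)

lemma pOn_any {ρ : Set ℕ → ℝ} (hρ : IsMeasure ρ) (𝒜 : Set (Set ℕ)) : POn 𝒜 ρ :=
  ⟨fun A _ => (hρ.1 A).1, hρ.2.1, fun A _ C _ hd => hρ.2.2 A C hd⟩

lemma Gens_mono {g : (ℕ → Set ℕ) → Pt} {j j' : ℕ → Set ℕ} (h : rI j j') :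
    Gens B g j ∪ sg g j ⊆ Gens B g j' := by
  rintro X (hX | hX)
  · rcases hX with (hX | hX) | hX
    · exact Or.inl (Or.inl hX)
    · exact Or.inl (Or.inr hX)
    · refine Or.inr ?_
      obtain ⟨k, hk, hXk⟩ := Set.mem_iUnion₂.1 hX
      exact Set.mem_iUnion₂.2 ⟨k, rI_trans hk h, hXk⟩
  · exact Or.inr (Set.mem_iUnion₂.2 ⟨j, h, hX⟩)

lemma Mmono {g : (ℕ → Set ℕ) → Pt} {j j' : ℕ → Set ℕ} (h : rI j j') :
    Mstage B g j ⊆ Mstage B g j' :=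
  clo_mono ((Gens_mono B h).trans Set.subset_union_left)

lemma Brep_sub_M (hB : IsSubalgebra B) {g : (ℕ → Set ℕ) → Pt} (j : ℕ → Set ℕ) :
    Brep B ⊆ Mstage B g j := by
  refine (Brep_subset_clo hB).trans (clo_mono ?_)
  rintro X (hX | hX)
  · exact Or.inl (Or.inl (Or.inl hX))
  · exact Or.inl (Or.inl (Or.inr hX))

lemma range_sub_M {g : (ℕ → Set ℕ) → Pt} {j : ℕ → Set ℕ} (hpart : IsPartition j) :
    Set.range j ⊆ Mstage B g j := by
  refine Set.Subset.trans ?_ (subset_clo _)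
  intro X hX
  refine Or.inr ?_
  rw [sg, if_pos hpart]
  exact Or.inl hX

lemma sel_mem_M {g : (ℕ → Set ℕ) → Pt} {j : ℕ → Set ℕ} (hpart : IsPartition j) :
    (g j).1 ∈ Mstage B g j := by
  apply subset_clo
  refine Or.inr ?_
  rw [sg, if_pos hpart]
  exact Or.inr rfl

lemma Nalg_sub_cloGens {g : (ℕ → Set ℕ) → Pt} (hB : IsSubalgebra B) (i : ℕ → Set ℕ) :
    Nalg B g i ⊆ clo (Gens B g i) := by
  rintro X (hX | hX)
  · refine (Brep_subset_clo hB).trans (clo_mono ?_) hX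
    rintro Y (hY | hY)
    · exact Or.inl (Or.inl hY)
    · exact Or.inl (Or.inr hY)
  · obtain ⟨j, hj, hXj⟩ := Set.mem_iUnion₂.1 hX
    exact clo_mono (Gens_mono B hj) hXj


section WithHyps
variable {B} {μ}
variable (hB : IsSubalgebra B) (hμ : IsPartialMeasure B μ)

/-- any two members of `Nalg` live in a common piece -/
lemma helperN {i : ℕ → Set ℕ} {X Y : Set ℕ}
    (hX : X ∈ Nalg B (FF B μ hB hμ) i) (hY : Y ∈ Nalg B (FF B μ hB hμ) i) :
    (X ∈ Brep B ∧ Y ∈ Brep B) ∨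
      ∃ j, rI j i ∧ X ∈ Mstage B (FF B μ hB hμ) j ∧ Y ∈ Mstage B (FF B μ hB hμ) j := by
  set g := FF B μ hB hμ
  rcases hX with hX | hX <;> rcases hY with hY | hY
  · exact Or.inl ⟨hX, hY⟩
  · obtain ⟨j, hj, hYj⟩ := Set.mem_iUnion₂.1 hY
    exact Or.inr ⟨j, hj, Brep_sub_M B hB j hX, hYj⟩
  · obtain ⟨j, hj, hXj⟩ := Set.mem_iUnion₂.1 hX
    exact Or.inr ⟨j, hj, hXj, Brep_sub_M B hB j hY⟩
  · obtain ⟨j, hj, hXj⟩ := Set.mem_iUnion₂.1 hX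
    obtain ⟨j', hj', hYj'⟩ := Set.mem_iUnion₂.1 hY
    rcases rI_tri j j' with h | h | h
    · exact Or.inr ⟨j', hj', Mmono B h hXj, hYj'⟩
    · rw [h] at hXj
      exact Or.inr ⟨j', hj', hXj, hYj'⟩
    · exact Or.inr ⟨j, hj, hXj, Mmono B h hYj'⟩

lemma M_sub_N {i j : ℕ → Set ℕ} (hj : rI j i) :
    Mstage B (FF B μ hB hμ) j ⊆ Nalg B (FF B μ hB hμ) i :=
  fun X hX => Or.inr (Set.mem_iUnion₂.2 ⟨j, hj, hX⟩)

lemma Brep_sub_N (i : ℕ → Set ℕ) : Brep B ⊆ Nalg B (FF B μ hB hμ) i := Set.subset_union_left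

lemma Nalg_subalg (i : ℕ → Set ℕ) : IsSubalgebra (Nalg B (FF B μ hB hμ) i) := by
  set g := FF B μ hB hμ
  have hBrsub : IsSubalgebra (Brep B) := Brep_subalgebra hB
  refine ⟨Or.inl hBrsub.1, Or.inl hBrsub.2.1, ?_, ?_, ?_⟩
  · rintro A (hA | hA)
    · exact Or.inl (hBrsub.2.2.1 A hA)
    · obtain ⟨j, hj, hAj⟩ := Set.mem_iUnion₂.1 hA
      exact Or.inr (Set.mem_iUnion₂.2 ⟨j, hj, (isSubalgebra_clo _).2.2.1 A hAj⟩)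
  · intro A hA C hC
    rcases helperN hB hμ hA hC with ⟨h1, h2⟩ | ⟨j, hj, h1, h2⟩
    · exact Or.inl (hBrsub.2.2.2.1 A h1 C h2)
    · exact Or.inr (Set.mem_iUnion₂.2 ⟨j, hj, (isSubalgebra_clo _).2.2.2.1 A h1 C h2⟩)
  · intro A hA C hC
    rcases helperN hB hμ hA hC with ⟨h1, h2⟩ | ⟨j, hj, h1, h2⟩
    · exact Or.inl (hBrsub.2.2.2.2 A h1 C h2)
    · exact Or.inr (Set.mem_iUnion₂.2 ⟨j, hj, (isSubalgebra_clo _).2.2.2.2 A h1 C h2⟩)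

variable {i : ℕ → Set ℕ}
variable (hIH : ∀ j, rI j i → GoodAt B μ hB hμ (FF B μ hB hμ) j (FF B μ hB hμ j))

include hIH in
lemma agreeM {j j' : ℕ → Set ℕ} (hj : rI j i) (hj' : rI j' i) {X : Set ℕ}
    (hXj : X ∈ Mstage B (FF B μ hB hμ) j) (hXj' : X ∈ Mstage B (FF B μ hB hμ) j') :
    (FF B μ hB hμ j).2 X = (FF B μ hB hμ j').2 X := by
  rcases rI_tri j j' with h | h | h
  · exact ((hIH j' hj').2.2.2.2.1 j h X hXj).symm
  · rw [h]
  · exact (hIH j hj).2.2.2.2.1 j' h X hXj'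

open scoped Classical in
noncomputable def mN (hB : IsSubalgebra B) (hμ : IsPartialMeasure B μ) (i : ℕ → Set ℕ) :
    Set ℕ → ℝ := fun X =>
  if h : ∃ j, rI j i ∧ X ∈ Mstage B (FF B μ hB hμ) j then (FF B μ hB hμ h.choose).2 X
  else nu0 B μ hB hμ X

include hIH in
lemma mN_spec1 {j : ℕ → Set ℕ} (hj : rI j i) {X : Set ℕ}
    (hX : X ∈ Mstage B (FF B μ hB hμ) j) : mN hB hμ i X = (FF B μ hB hμ j).2 X := by
  have hex : ∃ j', rI j' i ∧ X ∈ Mstage B (FF B μ hB hμ) j' := ⟨j, hj, hX⟩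
  rw [mN, dif_pos hex]
  exact agreeM hB hμ hIH hex.choose_spec.1 hj hex.choose_spec.2 hX

include hIH in
lemma mN_spec2 {X : Set ℕ} (hX : X ∈ Brep B) : mN hB hμ i X = nu0 B μ hB hμ X := by
  by_cases hex : ∃ j', rI j' i ∧ X ∈ Mstage B (FF B μ hB hμ) j'
  · rw [mN, dif_pos hex]
    exact (hIH hex.choose hex.choose_spec.1).2.2.2.1 X hX
  · rw [mN, dif_neg hex]

include hIH in
lemma mN_bounds (X : Set ℕ) : 0 ≤ mN hB hμ i X ∧ mN hB hμ i X ≤ 1 := by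
  by_cases hex : ∃ j', rI j' i ∧ X ∈ Mstage B (FF B μ hB hμ) j'
  · rw [mN, dif_pos hex]
    exact (hIH hex.choose hex.choose_spec.1).1.1 X
  · rw [mN, dif_neg hex]
    exact (nu0_meas B μ hB hμ).1 X

include hIH in
lemma mN_pOn : POn (Nalg B (FF B μ hB hμ) i) (mN hB hμ i) := by
  refine ⟨fun A _ => (mN_bounds hB hμ hIH A).1, ?_, ?_⟩
  · rw [mN_spec2 hB hμ hIH (mem_Brep_of_mem hB.2.1)]
    exact (nu0_meas B μ hB hμ).2.1
  · intro A hA C hC hd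
    rcases helperN hB hμ hA hC with ⟨h1, h2⟩ | ⟨j, hj, h1, h2⟩
    · have hU : A ∪ C ∈ Brep B := (Brep_subalgebra hB).2.2.2.1 A h1 C h2
      rw [mN_spec2 hB hμ hIH h1, mN_spec2 hB hμ hIH h2, mN_spec2 hB hμ hIH hU]
      exact (nu0_meas B μ hB hμ).2.2 A C hd
    · have hU : A ∪ C ∈ Mstage B (FF B μ hB hμ) j := (isSubalgebra_clo _).2.2.2.1 A h1 C h2
      rw [mN_spec1 hB hμ hIH hj h1, mN_spec1 hB hμ hIH hj h2, mN_spec1 hB hμ hIH hj hU]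
      exact (hIH j hj).1.2.2 A C hd

end WithHyps

section Cards
variable {B} {μ}

lemma mk_finite_sets : Cardinal.mk ↥{F : Set ℕ | F.Finite} ≤ ℵ₀ := by
  have hinj : Function.Injective (fun F : {F : Set ℕ | F.Finite} => F.2.toFinset) := by
    rintro ⟨F, hF⟩ ⟨F', hF'⟩ h
    simp only [Subtype.mk.injEq]
    have := congrArg (fun t : Finset ℕ => (t : Set ℕ)) h
    simpa [Set.Finite.coe_toFinset] using this
  refine (mk_le_of_injective hinj).trans ?_
  rw [mk_finset_of_infinite ℕ, mk_nat]

lemma mk_sg_le (g : (ℕ → Set ℕ) → Pt) (j : ℕ → Set ℕ) : Cardinal.mk ↥(sg g j) ≤ ℵ₀ := by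
  rw [sg]
  split_ifs with h
  · refine (mk_union_le _ _).trans ?_
    have h1 : Cardinal.mk ↥(Set.range j) ≤ ℵ₀ := mk_range_le.trans (by rw [mk_nat])
    have h2 : Cardinal.mk ↥({(g j).1} : Set (Set ℕ)) ≤ ℵ₀ := by
      rw [Cardinal.mk_singleton]
      exact one_le_aleph0
    calc Cardinal.mk ↥(Set.range j) + Cardinal.mk ↥({(g j).1} : Set (Set ℕ))
        ≤ ℵ₀ + ℵ₀ := add_le_add h1 h2
      _ = ℵ₀ := by rw [Cardinal.add_eq_self le_rfl]
  · simp

lemma mk_Gens_lt (hBcard : Cardinal.mk ↥B < Cardinal.continuum.{0})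
    (g : (ℕ → Set ℕ) → Pt) (i : ℕ → Set ℕ) :
    Cardinal.mk ↥(Gens B g i) < Cardinal.continuum.{0} := by
  have hc : (ℵ₀ : Cardinal.{0}) < Cardinal.continuum.{0} := Cardinal.aleph0_lt_continuum
  rw [Gens]
  refine lt_of_le_of_lt (mk_union_le _ _) (Cardinal.add_lt_of_lt hc.le ?_ ?_)
  · refine lt_of_le_of_lt (mk_union_le _ _) (Cardinal.add_lt_of_lt hc.le hBcard ?_)
    exact lt_of_le_of_lt mk_finite_sets hc
  · have heq : (⋃ j ∈ {j | rI j i}, sg g j) = ⋃ j : {j // rI j i}, sg g j.1 := by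
      ext X
      simp only [Set.mem_iUnion, Set.mem_setOf_eq]
      constructor
      · rintro ⟨j, hj, hX⟩
        exact ⟨⟨j, hj⟩, hX⟩
      · rintro ⟨⟨j, hj⟩, hX⟩
        exact ⟨j, hj, hX⟩
    rw [heq]
    refine lt_of_le_of_lt (mk_iUnion_le _) ?_
    refine Cardinal.mul_lt_of_lt hc.le (card_below i) ?_
    refine lt_of_le_of_lt (ciSup_le' (fun j => mk_sg_le g j.1)) hc

end Cards

end Dir1b
end Stmt7aux

namespace Stmt7aux
open Set Cardinal Filter

section Dir1c
variable {B : Set (Set ℕ)} {μ : Set ℕ → ℝ}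

lemma exists_good (hdom : domNumber = Cardinal.continuum.{0})
    (hBcard : Cardinal.mk ↥B < Cardinal.continuum.{0})
    (hB : IsSubalgebra B) (hμ : IsPartialMeasure B μ) (i : ℕ → Set ℕ)
    (hIH : ∀ j, rI j i → GoodAt B μ hB hμ (FF B μ hB hμ) j (FF B μ hB hμ j)) :
    ∃ p, GoodAt B μ hB hμ (FF B μ hB hμ) i p := by
  obtain ⟨ρ, hρmeas, hρext⟩ := totalExt (Nalg_subalg hB hμ i) (mN_pOn hB hμ hIH)
  have hρ_sp1 : ∀ j, rI j i → ∀ X ∈ Mstage B (FF B μ hB hμ) j, ρ X = (FF B μ hB hμ j).2 X := by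
    intro j hj X hX
    rw [hρext X (M_sub_N hB hμ hj hX), mN_spec1 hB hμ hIH hj hX]
  have hρ_Brep : ∀ X ∈ Brep B, ρ X = nu0 B μ hB hμ X := fun X hX => by
    rw [hρext X (Brep_sub_N hB hμ i hX), mN_spec2 hB hμ hIH hX]
  have hρ_fin : ∀ F : Set ℕ, F.Finite → ρ F = 0 := fun F hF => by
    rw [hρ_Brep F (mem_Brep_of_finite hB hF), nu0_finite B μ hB hμ F hF]
  have hρ_onB : ∀ A ∈ B, ρ A = μ A := fun A hA => by
    rw [hρ_Brep A (mem_Brep_of_mem hA), nu0_onB B μ hB hμ A hA]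
  by_cases hpart : IsPartition i
  · -- partition case
    set N' : Set (Set ℕ) := clo (Nalg B (FF B μ hB hμ) i ∪ Set.range i) with hN'def
    have hN'sub : IsSubalgebra N' := isSubalgebra_clo _
    have hNN' : Nalg B (FF B μ hB hμ) i ⊆ N' := fun X hX => subset_clo _ (Or.inl hX)
    have hiN' : ∀ n : ℕ, i n ∈ N' := fun n => subset_clo _ (Or.inr ⟨n, rfl⟩)
    have hN'card : Cardinal.mk ↥N' < Cardinal.continuum.{0} := by
      have h1 : Nalg B (FF B μ hB hμ) i ∪ Set.range i ⊆
          clo (Gens B (FF B μ hB hμ) i ∪ Set.range i) := by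
        rintro X (hX | hX)
        · exact clo_mono Set.subset_union_left (Nalg_sub_cloGens B hB i hX)
        · exact subset_clo _ (Or.inr hX)
      have h2 : N' ⊆ clo (Gens B (FF B μ hB hμ) i ∪ Set.range i) :=
        clo_le (isSubalgebra_clo _) h1
      refine lt_of_le_of_lt (mk_le_mk_of_subset h2) ?_
      refine mk_clo_lt ?_ Cardinal.aleph0_lt_continuum
      refine lt_of_le_of_lt (mk_union_le _ _)
        (Cardinal.add_lt_of_lt Cardinal.aleph0_lt_continuum.le
          (mk_Gens_lt hBcard _ i) ?_)
      refine lt_of_le_of_lt (mk_range_le.trans (le_of_eq mk_nat)) Cardinal.aleph0_lt_continuum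
    obtain ⟨S, hSfin, hhit⟩ := selector hdom hρmeas hN'card i hpart.1
    have hfin0 : ∀ F : Set ℕ, F.Finite → F ∈ N' ∧ ρ F = 0 := fun F hF =>
      ⟨hNN' (Brep_sub_N hB hμ i (mem_Brep_of_finite hB hF)), hρ_fin F hF⟩
    have houter := outer_val hN'sub hρmeas hfin0 hiN' hpart.1 hSfin hhit
    obtain ⟨𝒜', m', h𝒜'sub, hsub', hS𝒜', hm'pOn, hm'ext, hm'S⟩ :=
      stepExt hN'sub (pOn_any hρmeas N') S
    obtain ⟨ν, hνmeas, hνext⟩ := totalExt h𝒜'sub hm'pOn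
    have hchain : ∀ X ∈ N', ν X = ρ X := fun X hX => by
      rw [hνext X (hsub' hX), hm'ext X hX]
    have hνS : ν S = 1 - ∑' n : ℕ, ρ (i n) := by
      rw [hνext S hS𝒜', hm'S, houter]
    refine ⟨(S, ν), hνmeas, ?_, ?_, ?_, ?_, ?_⟩
    · intro F hF
      show ν F = 0
      rw [hchain F (hfin0 F hF).1]; exact hρ_fin F hF
    · intro A hA
      show ν A = μ A
      rw [hchain A (hNN' (Brep_sub_N hB hμ i (mem_Brep_of_mem hA)))]; exact hρ_onB A hA
    · intro X hX
      show ν X = nu0 B μ hB hμ X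
      rw [hchain X (hNN' (Brep_sub_N hB hμ i hX))]; exact hρ_Brep X hX
    · intro j hj X hX
      show ν X = (FF B μ hB hμ j).2 X
      rw [hchain X (hNN' (M_sub_N hB hμ hj hX))]
      exact hρ_sp1 j hj X hX
    · intro _
      refine ⟨hSfin, ?_⟩
      show ν S = 1 - ∑' n : ℕ, ν (i n)
      have htsum : ∑' n : ℕ, ν (i n) = ∑' n : ℕ, ρ (i n) :=
        tsum_congr (fun n => hchain (i n) (hiN' n))
      rw [htsum]
      exact hνS
  · -- non-partition case
    exact ⟨(∅, ρ), hρmeas, hρ_fin, hρ_onB, hρ_Brep, hρ_sp1, fun h => absurd h hpart⟩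

lemma good_all (hdom : domNumber = Cardinal.continuum.{0})
    (hBcard : Cardinal.mk ↥B < Cardinal.continuum.{0})
    (hB : IsSubalgebra B) (hμ : IsPartialMeasure B μ) :
    ∀ i, GoodAt B μ hB hμ (FF B μ hB hμ) i (FF B μ hB hμ i) := by
  intro i
  induction i using rI_wf.induction with
  | _ i IH =>
    classical
    set g0 : (ℕ → Set ℕ) → Pt := fun j => if h : rI j i then FF B μ hB hμ j else default
      with hg0def
    have hagree : ∀ j, rI j i → FF B μ hB hμ j = g0 j := by
      intro j hj
      rw [hg0def]
      simp only
      rw [dif_pos hj]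
    have hex0 : ∃ p, GoodAt B μ hB hμ (FF B μ hB hμ) i p :=
      exists_good hdom hBcard hB hμ i IH
    have hex : ∃ p, GoodAt B μ hB hμ g0 i p := by
      obtain ⟨p, hp⟩ := hex0
      exact ⟨p, (GoodAt_congr B μ hagree p).1 hp⟩
    have hFFi : FF B μ hB hμ i = hex.choose := by
      conv_lhs => rw [FF_eq B μ i]
      exact dif_pos hex
    have h1 : GoodAt B μ hB hμ g0 i (FF B μ hB hμ i) := by
      rw [hFFi]
      exact hex.choose_spec
    exact (GoodAt_congr B μ (fun j hj => (hagree j hj).symm) _).1 h1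

end Dir1c
end Stmt7aux

namespace Stmt7aux
open Set Cardinal Filter

section Dir1d
variable (B : Set (Set ℕ)) (μ : Set ℕ → ℝ)

open scoped Classical in
noncomputable def partOf (X : Set ℕ) : ℕ → Set ℕ := fun n =>
  if n = 0 then X else if n = 1 then Xᶜ else ∅

lemma partOf_isPartition (X : Set ℕ) : IsPartition (partOf X) := by
  constructor
  · intro a b hab
    rw [Function.onFun]
    unfold partOf
    split_ifs with h1 h2 h3 h4 h5 <;> try subst_vars <;> try simp_all
    all_goals simp [disjoint_compl_right, disjoint_compl_left]
  · ext x
    simp only [Set.mem_iUnion, Set.mem_univ, iff_true]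
    by_cases hx : x ∈ X
    · exact ⟨0, by simp [partOf, hx]⟩
    · exact ⟨1, by simp [partOf, hx]⟩

variable (hB : IsSubalgebra B) (hμ : IsPartialMeasure B μ)

lemma exists_stage (X : Set ℕ) : ∃ i, X ∈ Mstage B (FF B μ hB hμ) i := by
  refine ⟨partOf X, range_sub_M B (partOf_isPartition X) ⟨0, ?_⟩⟩
  simp [partOf]

noncomputable def nuF : Set ℕ → ℝ := fun X =>
  (FF B μ hB hμ (exists_stage B μ hB hμ X).choose).2 X

variable (hdom : domNumber = Cardinal.continuum.{0})
    (hBcard : Cardinal.mk ↥B < Cardinal.continuum.{0})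

include hdom hBcard in
lemma stage_agree {X : Set ℕ} {i i' : ℕ → Set ℕ}
    (h1 : X ∈ Mstage B (FF B μ hB hμ) i) (h2 : X ∈ Mstage B (FF B μ hB hμ) i') :
    (FF B μ hB hμ i).2 X = (FF B μ hB hμ i').2 X := by
  rcases rI_tri i i' with h | h | h
  · exact ((good_all hdom hBcard hB hμ i').2.2.2.2.1 i h X h1).symm
  · rw [h]
  · exact (good_all hdom hBcard hB hμ i).2.2.2.2.1 i' h X h2

include hdom hBcard in
lemma nuF_val {X : Set ℕ} {i : ℕ → Set ℕ} (h : X ∈ Mstage B (FF B μ hB hμ) i) :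
    nuF B μ hB hμ X = (FF B μ hB hμ i).2 X :=
  stage_agree B μ hB hμ hdom hBcard (exists_stage B μ hB hμ X).choose_spec h

lemma M_common (i i' : ℕ → Set ℕ) : ∃ k, Mstage B (FF B μ hB hμ) i ⊆ Mstage B (FF B μ hB hμ) k
    ∧ Mstage B (FF B μ hB hμ) i' ⊆ Mstage B (FF B μ hB hμ) k := by
  rcases rI_tri i i' with h | h | h
  · exact ⟨i', Mmono B h, le_refl _⟩
  · rw [h]; exact ⟨i', le_refl _, le_refl _⟩
  · exact ⟨i, le_refl _, Mmono B h⟩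

include hB hμ hdom hBcard in
theorem dir1_main :
    ∃ ν : Set ℕ → ℝ, IsMeasure ν ∧ IsFree ν ∧ IsPMeasure ν ∧ ∀ A ∈ B, ν A = μ A := by
  have 𝔾 := good_all hdom hBcard hB hμ
  set g := FF B μ hB hμ with hg
  set ν := nuF B μ hB hμ with hν
  have hνdef : ∀ X : Set ℕ, ∃ i, X ∈ Mstage B g i ∧ ν X = (g i).2 X := by
    intro X
    exact ⟨(exists_stage B μ hB hμ X).choose, (exists_stage B μ hB hμ X).choose_spec, rfl⟩
  have hval : ∀ {X : Set ℕ} {i : ℕ → Set ℕ}, X ∈ Mstage B g i → ν X = (g i).2 X :=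
    fun hX => nuF_val B μ hB hμ hdom hBcard hX
  refine ⟨ν, ⟨?_, ?_, ?_⟩, ?_, ?_, ?_⟩
  · -- bounds
    intro A
    obtain ⟨i, _, hAi⟩ := hνdef A
    rw [hAi]
    exact (𝔾 i).1.1 A
  · -- univ
    obtain ⟨i, _, hAi⟩ := hνdef Set.univ
    rw [hAi]
    exact (𝔾 i).1.2.1
  · -- additivity
    intro A C hd
    obtain ⟨iA, hA, _⟩ := hνdef A
    obtain ⟨iC, hC, _⟩ := hνdef C
    obtain ⟨iU, hU, _⟩ := hνdef (A ∪ C)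
    obtain ⟨k1, hk1A, hk1C⟩ := M_common B μ hB hμ iA iC
    obtain ⟨k, hk2, hkU⟩ := M_common B μ hB hμ k1 iU
    have hAk : A ∈ Mstage B g k := hk2 (hk1A hA)
    have hCk : C ∈ Mstage B g k := hk2 (hk1C hC)
    have hUk : A ∪ C ∈ Mstage B g k := hkU hU
    rw [hval hAk, hval hCk, hval hUk]
    exact (𝔾 k).1.2.2 A C hd
  · -- free
    intro A hA
    obtain ⟨i, _, hAi⟩ := hνdef A
    rw [hAi]
    exact (𝔾 i).2.1 A hA
  · -- P-measure
    intro A hpart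
    set S := (g A).1 with hS
    have hgood := (𝔾 A).2.2.2.2.2 hpart
    refine ⟨S, hgood.1, ?_⟩
    have hSM : S ∈ Mstage B g A := sel_mem_M B hpart
    have htsum : ∑' n : ℕ, ν (A n) = ∑' n : ℕ, (g A).2 (A n) :=
      tsum_congr (fun n => hval (range_sub_M B hpart ⟨n, rfl⟩))
    rw [hval hSM, htsum]
    exact hgood.2
  · -- extends μ
    intro A hA
    obtain ⟨i, _, hAi⟩ := hνdef A
    rw [hAi]
    exact (𝔾 i).2.2.1 A hA

end Dir1d
end Stmt7aux


/-- `𝔡 = 𝔠` iff every partial measure on a Boolean subalgebra of size `< 𝔠` extends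
to a free P-measure on all subsets of `ℕ`. -/
theorem stmt_7 :
    domNumber = Cardinal.continuum.{0} ↔
      ∀ (B : Set (Set ℕ)) (μ : Set ℕ → ℝ), IsSubalgebra B →
        Cardinal.mk ↥B < Cardinal.continuum.{0} → IsPartialMeasure B μ →
        ∃ ν : Set ℕ → ℝ, IsMeasure ν ∧ IsFree ν ∧ IsPMeasure ν ∧ ∀ A ∈ B, ν A = μ A := by
  constructor
  · intro hdom B μ hB hBcard hμ
    exact Stmt7aux.dir1_main B μ hB hμ hdom hBcard
  · intro h
    exact Stmt7aux.dir2 h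
end
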